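/- arXiv:1602.08744 — 10 statements merged into one kernel-verified Lean document; each statement's English description precedes it below -/
import Mathlib

section
/- Let W be a finite-dimensional real vector space and let Q, R : W → ℝ be continuous functions such that R(w) > 0 for all w ≠ 0. Suppose there exists an endomorphism E of W such that the one-parameter group t^E = exp((log t)E) is contracting (i.e., ‖t^E‖ → 0 as t → 0⁺) and both Q and R are homogeneous with respect to {t^E}, meaning tQ(w) = Q(t^E w) and tR(w) = R(t^E w) for all t > 0 and w ∈ W. Then there exists a constant C > 0 such that Q(w) ≤ C·R(w) for all w ∈ W. -/
open Filter Topology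

set_option maxHeartbeats 1000000 in
set_option synthInstance.maxHeartbeats 400000 in
/-- If Q, R are continuous on a finite-dimensional real normed space W, R is positive away
from 0, and both are homogeneous with respect to a contracting one-parameter group
t^E = exp((log t)•E), then Q ≤ C·R for some C > 0. -/
theorem comparable_of_homogeneous {W : Type*} [NormedAddCommGroup W] [NormedSpace ℝ W]
    [FiniteDimensional ℝ W]
    (Q R : W → ℝ) (hQcont : Continuous Q) (hRcont : Continuous R)
    (hRpos : ∀ w : W, w ≠ 0 → 0 < R w)
    (E : W →L[ℝ] W)
    (hcontract : Tendsto (fun t : ℝ => ‖NormedSpace.exp ((Real.log t) • E)‖)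
      (nhdsWithin 0 (Set.Ioi 0)) (nhds 0))
    (hQhom : ∀ t : ℝ, 0 < t → ∀ w : W,
      t * Q w = Q ((NormedSpace.exp ((Real.log t) • E)) w))
    (hRhom : ∀ t : ℝ, 0 < t → ∀ w : W,
      t * R w = R ((NormedSpace.exp ((Real.log t) • E)) w)) :
    ∃ C : ℝ, 0 < C ∧ ∀ w : W, Q w ≤ C * R w := by
  let +nondep : NormedAlgebra ℚ (W →L[ℝ] W) := .restrictScalars ℚ ℝ (W →L[ℝ] W)
  set g : ℝ → (W →L[ℝ] W) := fun t => NormedSpace.exp ((Real.log t) • E) with hg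
  -- Q 0 = 0 and R 0 = 0
  have hQ0 : Q 0 = 0 := by
    have h := hQhom 2 (by norm_num) 0
    rw [map_zero] at h; linarith
  have hR0 : R 0 = 0 := by
    have h := hRhom 2 (by norm_num) 0
    rw [map_zero] at h; linarith
  -- group inverse property
  have hinv : ∀ t : ℝ, 0 < t → ∀ w : W, g t⁻¹ (g t w) = w := by
    intro t ht w
    have hc : Commute ((Real.log t⁻¹) • E) ((Real.log t) • E) :=
      ((Commute.refl E).smul_left _).smul_right _
    have hmul : g t⁻¹ * g t = 1 := by
      rw [hg]; dsimp only
      rw [← NormedSpace.exp_add_of_commute hc, Real.log_inv, ← add_smul]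
      simp
    have h2 : (g t⁻¹ * g t) w = (1 : W →L[ℝ] W) w := by rw [hmul]
    simpa using h2
  -- continuity of t ↦ g t w on Ioi 0
  have hgcont : ∀ w : W, ContinuousOn (fun t => g t w) (Set.Ioi (0:ℝ)) := by
    intro w
    have h1 : ContinuousOn (fun t : ℝ => Real.log t • E) (Set.Ioi 0) :=
      (Real.continuousOn_log.mono (by intro x hx; exact ne_of_gt hx)).smul continuousOn_const
    have h2 : ContinuousOn g (Set.Ioi (0:ℝ)) :=
      NormedSpace.exp_continuous.comp_continuousOn h1
    exact (ContinuousLinearMap.apply ℝ W w).continuous.comp_continuousOn h2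
  -- for every nonzero w there is t > 0 with ‖g t w‖ = 1
  have hsphere : ∀ w : W, w ≠ 0 → ∃ t : ℝ, 0 < t ∧ ‖g t w‖ = 1 := by
    intro w hw
    have hwpos : 0 < ‖w‖ := norm_pos_iff.mpr hw
    obtain ⟨t₀, ht₀mem, ht₀⟩ : ∃ t₀ ∈ Set.Ioi (0:ℝ), ‖g t₀‖ < (‖w‖)⁻¹ := by
      have h : ∀ᶠ t in nhdsWithin 0 (Set.Ioi (0:ℝ)), ‖g t‖ < (‖w‖)⁻¹ :=
        hcontract.eventually (eventually_lt_nhds (by positivity))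
      exact (h.and self_mem_nhdsWithin).exists.imp (fun t ⟨h1, h2⟩ => ⟨h2, h1⟩)
    have ht₀pos : 0 < t₀ := ht₀mem
    have hsmall : ‖g t₀ w‖ < 1 := by
      calc ‖g t₀ w‖ ≤ ‖g t₀‖ * ‖w‖ := (g t₀).le_opNorm w
        _ < (‖w‖)⁻¹ * ‖w‖ := mul_lt_mul_of_pos_right ht₀ hwpos
        _ = 1 := inv_mul_cancel₀ (ne_of_gt hwpos)
    obtain ⟨s, hsmem, hs⟩ : ∃ s ∈ Set.Ioi (0:ℝ), ‖g s‖ < ‖w‖ / 2 := by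
      have h : ∀ᶠ t in nhdsWithin 0 (Set.Ioi (0:ℝ)), ‖g t‖ < ‖w‖ / 2 :=
        hcontract.eventually (eventually_lt_nhds (by positivity))
      exact (h.and self_mem_nhdsWithin).exists.imp (fun t ⟨h1, h2⟩ => ⟨h2, h1⟩)
    have hspos : 0 < s := hsmem
    have hsinvpos : 0 < s⁻¹ := by positivity
    have hgsw : g s (g s⁻¹ w) = w := by
      have h := hinv s⁻¹ hsinvpos w
      rwa [inv_inv] at h
    have hbig : 1 < ‖g s⁻¹ w‖ := by
      have key : ‖w‖ ≤ ‖g s‖ * ‖g s⁻¹ w‖ := by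
        calc ‖w‖ = ‖g s (g s⁻¹ w)‖ := by rw [hgsw]
          _ ≤ ‖g s‖ * ‖g s⁻¹ w‖ := (g s).le_opNorm _
      by_contra hle
      push_neg at hle
      have h2 : ‖w‖ ≤ ‖g s‖ * 1 :=
        le_trans key (mul_le_mul_of_nonneg_left hle (norm_nonneg _))
      rw [mul_one] at h2
      linarith
    -- intermediate value theorem
    have hsub : Set.uIcc t₀ s⁻¹ ⊆ Set.Ioi (0:ℝ) := by
      intro x hx
      have h1 : min t₀ s⁻¹ ≤ x := hx.1
      exact lt_of_lt_of_le (lt_min ht₀pos hsinvpos) h1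
    have hcontIcc : ContinuousOn (fun t => ‖g t w‖) (Set.uIcc t₀ s⁻¹) :=
      ((hgcont w).norm).mono hsub
    have h1mem : (1:ℝ) ∈ Set.uIcc (‖g t₀ w‖) (‖g s⁻¹ w‖) :=
      Set.mem_uIcc.mpr (Or.inl ⟨le_of_lt hsmall, le_of_lt hbig⟩)
    obtain ⟨t, htmem, ht⟩ := intermediate_value_uIcc hcontIcc h1mem
    exact ⟨t, hsub htmem, ht⟩
  -- main argument
  by_cases hS : (Metric.sphere (0:W) 1).Nonempty
  · obtain ⟨vM, hvM, hMmax⟩ := (isCompact_sphere (0:W) 1).exists_isMaxOn hS hQcont.continuousOn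
    obtain ⟨vm, hvm, hmmin⟩ := (isCompact_sphere (0:W) 1).exists_isMinOn hS hRcont.continuousOn
    set M := Q vM with hM
    set m := R vm with hm
    have hvmne : vm ≠ 0 := by
      intro h
      rw [h] at hvm
      simp at hvm
    have hmpos : 0 < m := hRpos vm hvmne
    refine ⟨(|M| + 1) / m, by positivity, fun w => ?_⟩
    by_cases hw : w = 0
    · rw [hw, hQ0, hR0]; simp
    · obtain ⟨t, htpos, htw⟩ := hsphere w hw
      set v := g t w with hv
      have hvsphere : v ∈ Metric.sphere (0:W) 1 := by
        rw [mem_sphere_zero_iff_norm]; exact htw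
      have hQv : Q v ≤ M := hMmax hvsphere
      have hRv : m ≤ R v := hmmin hvsphere
      have hQeq : t * Q w = Q v := hQhom t htpos w
      have hReq : t * R w = R v := hRhom t htpos w
      have hkey : t * Q w ≤ ((|M| + 1) / m) * (t * R w) := by
        rw [hQeq, hReq]
        calc Q v ≤ M := hQv
          _ ≤ |M| := le_abs_self M
          _ ≤ (|M| + 1) / m * m := by
              rw [div_mul_cancel₀ _ (ne_of_gt hmpos)]; linarith
          _ ≤ (|M| + 1) / m * R v := by
              apply mul_le_mul_of_nonneg_left hRv
              positivity
      have h2 : t * Q w ≤ t * (((|M| + 1) / m) * R w) := by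
        calc t * Q w ≤ ((|M| + 1) / m) * (t * R w) := hkey
          _ = t * (((|M| + 1) / m) * R w) := by ring
      exact le_of_mul_le_mul_left h2 htpos
  · refine ⟨1, one_pos, fun w => ?_⟩
    by_cases hw : w = 0
    · rw [hw, hQ0, hR0]; simp
    · exfalso
      obtain ⟨t, htpos, htw⟩ := hsphere w hw
      exact hS ⟨g t w, by rw [mem_sphere_zero_iff_norm]; exact htw⟩
end

section
/- Let W be a finite-dimensional real vector space and P : W → ℂ a nondegenerate polynomial (P(w) ≠ 0 for all w ≠ 0) which is homogeneous with respect to a contracting one-parameter group {t^E} for some diagonalizable endomorphism E with positive real spectrum. Then |P(ξ)| → ∞ as |ξ| → ∞. -/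
open Filter Matrix

/-- A nondegenerate polynomial on ℝ^d, homogeneous with respect to the contracting group
{t^E} for a diagonalizable E with positive real spectrum, blows up at infinity. -/
theorem abs_tendsto_atTop_of_nondegenerate_homogeneous {d : ℕ}
    (p : MvPolynomial (Fin d) ℂ) (P : (Fin d → ℝ) → ℂ)
    (hP : ∀ ξ : Fin d → ℝ, P ξ = MvPolynomial.eval (fun i => (ξ i : ℂ)) p)
    (hnondeg : ∀ ξ : Fin d → ℝ, ξ ≠ 0 → P ξ ≠ 0)
    (E B : Matrix (Fin d) (Fin d) ℝ) (D : Fin d → ℝ)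
    (hB : IsUnit B) (hD : ∀ i, 0 < D i)
    (hdiag : E = B * Matrix.diagonal D * B⁻¹)
    (hhom : ∀ t : ℝ, 0 < t → ∀ ξ : Fin d → ℝ,
      P ((NormedSpace.exp ((Real.log t) • E)).mulVec ξ) = (t : ℂ) * P ξ) :
    Tendsto (fun ξ : Fin d → ℝ => ‖P ξ‖) (Bornology.cobounded (Fin d → ℝ)) atTop := by
  classical
  rcases Nat.eq_zero_or_pos d with hd | hd
  · subst hd
    have huniv : (Set.univ : Set (Fin 0 → ℝ)) = {0} := by
      ext x; simp [Subsingleton.elim x 0]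
    haveI : BoundedSpace (Fin 0 → ℝ) := ⟨huniv ▸ Bornology.isBounded_singleton⟩
    rw [Bornology.cobounded_eq_bot]
    exact tendsto_bot
  haveI : Nonempty (Fin d) := ⟨⟨0, hd⟩⟩
  -- basic facts about B
  have hBdet : IsUnit B.det := (Matrix.isUnit_iff_isUnit_det B).mp hB
  have hBinv : B⁻¹ * B = 1 := Matrix.nonsing_inv_mul B hBdet
  have hBinv' : B * B⁻¹ = 1 := Matrix.mul_nonsing_inv B hBdet
  -- the exponent bound c
  set c : ℝ := ∑ i, D i with hc
  have hc0 : 0 < c := Finset.sum_pos (fun i _ => hD i) ⟨⟨0, hd⟩, Finset.mem_univ _⟩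
  have hDc : ∀ i, D i ≤ c :=
    fun i => Finset.single_le_sum (f := D) (fun j _ => (hD j).le) (Finset.mem_univ i)
  -- the scaling matrices
  set N : ℝ → Matrix (Fin d) (Fin d) ℝ :=
    fun s => B * Matrix.diagonal (fun i => s ^ D i) * B⁻¹ with hNdef
  -- exp formula
  have hexp : ∀ t : ℝ, 0 < t → NormedSpace.exp ((Real.log t) • E) = N t := by
    intro t ht
    have h1 : (Real.log t) • E = B * ((Real.log t) • Matrix.diagonal D) * B⁻¹ := by
      rw [hdiag, ← smul_mul_assoc, ← mul_smul_comm]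
    rw [h1, Matrix.exp_conj B _ hB, hNdef]
    congr 2
    rw [← Matrix.diagonal_smul, Matrix.exp_diagonal, Pi.exp_def]
    have hfun : (fun i => NormedSpace.exp ((Real.log t • D) i)) = fun i => t ^ D i := by
      funext i
      rw [Pi.smul_apply, smul_eq_mul, ← Real.exp_eq_exp_ℝ, Real.rpow_def_of_pos ht]
    rw [hfun]
  -- algebraic facts about N
  have hN1 : N 1 = 1 := by
    simp only [hNdef, Real.one_rpow]
    rw [Matrix.diagonal_one, mul_one, hBinv']
  have hNmul : ∀ a b : ℝ, 0 ≤ a → 0 ≤ b → N a * N b = N (a * b) := by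
    intro a b ha hb
    simp only [hNdef]
    have hfun : (fun i => a ^ D i * b ^ D i) = fun i => (a * b) ^ D i := by
      funext i; exact (Real.mul_rpow ha hb).symm
    have : B * Matrix.diagonal (fun i => a ^ D i) * B⁻¹ *
        (B * Matrix.diagonal (fun i => b ^ D i) * B⁻¹) =
        B * (Matrix.diagonal (fun i => a ^ D i) * ((B⁻¹ * B) *
          Matrix.diagonal (fun i => b ^ D i))) * B⁻¹ := by
      simp only [Matrix.mul_assoc]
    rw [this, hBinv, one_mul, Matrix.diagonal_mul_diagonal, hfun]
  -- norm bounds for the action of N via continuous linear maps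
  set T1 : (Fin d → ℝ) →L[ℝ] (Fin d → ℝ) :=
    LinearMap.toContinuousLinearMap (Matrix.mulVecLin B) with hT1
  set T2 : (Fin d → ℝ) →L[ℝ] (Fin d → ℝ) :=
    LinearMap.toContinuousLinearMap (Matrix.mulVecLin B⁻¹) with hT2
  set K : ℝ := max (‖T1‖ * ‖T2‖) 1 with hK
  have hK1 : (1 : ℝ) ≤ K := le_max_right _ _
  have hK0 : 0 < K := lt_of_lt_of_le one_pos hK1
  have hbound : ∀ u : ℝ, 1 ≤ u → ∀ v : Fin d → ℝ, ‖N u *ᵥ v‖ ≤ K * u ^ c * ‖v‖ := by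
    intro u hu v
    have hu0 : 0 ≤ u := le_trans zero_le_one hu
    have huc : 0 ≤ u ^ c := Real.rpow_nonneg hu0 c
    have hNv : N u *ᵥ v = B *ᵥ (Matrix.diagonal (fun i => u ^ D i) *ᵥ (B⁻¹ *ᵥ v)) := by
      simp only [hNdef]
      rw [← Matrix.mulVec_mulVec, ← Matrix.mulVec_mulVec]
    rw [hNv]
    have hmid : ∀ w : Fin d → ℝ,
        ‖Matrix.diagonal (fun i => u ^ D i) *ᵥ w‖ ≤ u ^ c * ‖w‖ := by
      intro w
      rw [pi_norm_le_iff_of_nonneg (by positivity)]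
      intro i
      rw [Matrix.mulVec_diagonal]
      have h1 : u ^ D i ≤ u ^ c := Real.rpow_le_rpow_of_exponent_le hu (hDc i)
      have h2 : ‖w i‖ ≤ ‖w‖ := norm_le_pi_norm w i
      have h3 : 0 ≤ u ^ D i := Real.rpow_nonneg hu0 _
      calc ‖u ^ D i * w i‖ = u ^ D i * ‖w i‖ := by
            rw [norm_mul, Real.norm_of_nonneg h3]
        _ ≤ u ^ c * ‖w‖ := by
            apply mul_le_mul h1 h2 (norm_nonneg _) huc
    have e1 : B *ᵥ (Matrix.diagonal (fun i => u ^ D i) *ᵥ (B⁻¹ *ᵥ v)) =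
        T1 (Matrix.diagonal (fun i => u ^ D i) *ᵥ (T2 v)) := rfl
    rw [e1]
    calc ‖T1 (Matrix.diagonal (fun i => u ^ D i) *ᵥ (T2 v))‖
        ≤ ‖T1‖ * ‖Matrix.diagonal (fun i => u ^ D i) *ᵥ (T2 v)‖ := T1.le_opNorm _
      _ ≤ ‖T1‖ * (u ^ c * ‖T2 v‖) := by
          apply mul_le_mul_of_nonneg_left (hmid _) (norm_nonneg _)
      _ ≤ ‖T1‖ * (u ^ c * (‖T2‖ * ‖v‖)) := by
          apply mul_le_mul_of_nonneg_left _ (norm_nonneg _)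
          exact mul_le_mul_of_nonneg_left (T2.le_opNorm v) huc
      _ = (‖T1‖ * ‖T2‖) * u ^ c * ‖v‖ := by ring
      _ ≤ K * u ^ c * ‖v‖ := by
          apply mul_le_mul_of_nonneg_right _ (norm_nonneg v)
          exact mul_le_mul_of_nonneg_right (le_max_left _ _) huc
  -- continuity of P
  have hPc : Continuous P := by
    have h1 : Continuous fun ξ : Fin d → ℝ => MvPolynomial.eval (fun i => (ξ i : ℂ)) p := by
      apply (MvPolynomial.continuous_eval (p := p)).comp
      exact continuous_pi fun i => Complex.continuous_ofReal.comp (continuous_apply i)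
    have h2 : P = fun ξ => MvPolynomial.eval (fun i => (ξ i : ℂ)) p := funext hP
    rw [h2]; exact h1
  -- minimum of ‖P‖ on the unit sphere
  obtain ⟨η₀, hη₀s, hmin⟩ := (isCompact_sphere (0 : Fin d → ℝ) 1).exists_isMinOn
    (NormedSpace.sphere_nonempty.2 zero_le_one) (hPc.norm.continuousOn)
  set m : ℝ := ‖P η₀‖ with hm
  have hη₀ne : η₀ ≠ 0 := by
    intro h
    rw [mem_sphere_zero_iff_norm, h, norm_zero] at hη₀s
    exact one_ne_zero hη₀s.symm
  have hm0 : 0 < m := norm_pos_iff.mpr (hnondeg η₀ hη₀ne)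
  -- key pointwise lower bound
  have key : ∀ ξ : Fin d → ℝ, 1 ≤ ‖ξ‖ → m * (‖ξ‖ / K) ^ (1 / c) ≤ ‖P ξ‖ := by
    intro ξ hξ
    -- the continuous function s ↦ ‖N s *ᵥ ξ‖
    have hψc : Continuous fun s : ℝ => ‖N s *ᵥ ξ‖ := by
      have h0 : ∀ s : ℝ, N s *ᵥ ξ =
          T1 (Matrix.diagonal (fun i => s ^ D i) *ᵥ (T2 ξ)) := by
        intro s
        simp only [hNdef]
        rw [← Matrix.mulVec_mulVec, ← Matrix.mulVec_mulVec]
        rfl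
      have h1 : Continuous fun s : ℝ => Matrix.diagonal (fun i => s ^ D i) *ᵥ (T2 ξ) := by
        apply continuous_pi
        intro i
        simp only [Matrix.mulVec_diagonal]
        have : Continuous fun s : ℝ => s ^ D i := by
          rw [continuous_iff_continuousAt]
          intro x
          exact Real.continuousAt_rpow_const x (D i) (Or.inr (hD i).le)
        exact this.mul continuous_const
      simp only [h0]
      exact (T1.continuous.comp h1).norm
    -- IVT to find s ∈ (0,1] with ‖N s *ᵥ ξ‖ = 1
    have hψ0 : ‖N (0 : ℝ) *ᵥ ξ‖ = 0 := by
      have : N (0 : ℝ) = 0 := by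
        simp only [hNdef]
        have : (fun i => (0 : ℝ) ^ D i) = fun _ => (0 : ℝ) := by
          funext i; exact Real.zero_rpow (hD i).ne'
        rw [this, Matrix.diagonal_zero, mul_zero, zero_mul]
      rw [this, Matrix.zero_mulVec, norm_zero]
    have hψ1 : ‖N (1 : ℝ) *ᵥ ξ‖ = ‖ξ‖ := by rw [hN1, Matrix.one_mulVec]
    have hmem : (1 : ℝ) ∈ Set.Icc (‖N (0:ℝ) *ᵥ ξ‖) (‖N (1:ℝ) *ᵥ ξ‖) := by
      rw [hψ0, hψ1]; exact ⟨zero_le_one, hξ⟩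
    obtain ⟨s, hsIcc, hs1⟩ := intermediate_value_Icc zero_le_one
      ((hψc.continuousOn : ContinuousOn (fun s : ℝ => ‖N s *ᵥ ξ‖) _)) hmem
    have hs1' : ‖N s *ᵥ ξ‖ = 1 := hs1
    have hs0 : 0 < s := by
      rcases lt_or_eq_of_le hsIcc.1 with h | h
      · exact h
      · exfalso; rw [← h, hψ0] at hs1'; exact one_ne_zero hs1'.symm
    have hsle1 : s ≤ 1 := hsIcc.2
    set η : Fin d → ℝ := N s *ᵥ ξ with hη
    have hηs : η ∈ Metric.sphere (0 : Fin d → ℝ) 1 := by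
      rw [mem_sphere_zero_iff_norm]; exact hs1'
    -- homogeneity
    have hhs := hhom s hs0 ξ
    rw [hexp s hs0] at hhs
    have hPη : ‖P η‖ = s * ‖P ξ‖ := by
      rw [hη, hhs, norm_mul, Complex.norm_real, Real.norm_of_nonneg hs0.le]
    have hmPη : m ≤ ‖P η‖ := hmin hηs
    -- recover ξ from η
    have hrec : ξ = N s⁻¹ *ᵥ η := by
      rw [hη, Matrix.mulVec_mulVec, hNmul s⁻¹ s (inv_nonneg.mpr hs0.le) hs0.le,
        inv_mul_cancel₀ hs0.ne', hN1, Matrix.one_mulVec]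
    have hsinv1 : 1 ≤ s⁻¹ := one_le_inv_iff₀.mpr ⟨hs0, hsle1⟩
    have hξbound : ‖ξ‖ ≤ K * s⁻¹ ^ c := by
      calc ‖ξ‖ = ‖N s⁻¹ *ᵥ η‖ := by rw [← hrec]
        _ ≤ K * s⁻¹ ^ c * ‖η‖ := hbound s⁻¹ hsinv1 η
        _ = K * s⁻¹ ^ c := by rw [hs1', mul_one]
    -- deduce (‖ξ‖/K)^(1/c) ≤ s⁻¹
    have hdiv : ‖ξ‖ / K ≤ s⁻¹ ^ c := (div_le_iff₀ hK0).mpr (by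
      calc ‖ξ‖ ≤ K * s⁻¹ ^ c := hξbound
        _ = s⁻¹ ^ c * K := mul_comm _ _)
    have hsinv0 : (0:ℝ) ≤ s⁻¹ := inv_nonneg.mpr hs0.le
    have hpow : (‖ξ‖ / K) ^ (1 / c) ≤ s⁻¹ := by
      have h1 : (‖ξ‖ / K) ^ (1 / c) ≤ (s⁻¹ ^ c) ^ (1 / c) :=
        Real.rpow_le_rpow (by positivity) hdiv (by positivity)
      have h2 : (s⁻¹ ^ c) ^ (1 / c) = s⁻¹ := by
        rw [← Real.rpow_mul hsinv0, mul_one_div_cancel hc0.ne', Real.rpow_one]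
      rwa [h2] at h1
    -- conclude
    have h3 : m * s⁻¹ ≤ ‖P ξ‖ := by
      have : m ≤ s * ‖P ξ‖ := hPη ▸ hmPη
      calc m * s⁻¹ ≤ (s * ‖P ξ‖) * s⁻¹ :=
            mul_le_mul_of_nonneg_right this hsinv0
        _ = ‖P ξ‖ * (s * s⁻¹) := by ring
        _ = ‖P ξ‖ := by rw [mul_inv_cancel₀ hs0.ne', mul_one]
    calc m * (‖ξ‖ / K) ^ (1 / c) ≤ m * s⁻¹ :=
          mul_le_mul_of_nonneg_left hpow hm0.le
      _ ≤ ‖P ξ‖ := h3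
  -- the comparison function tends to infinity
  have hcomp : Tendsto (fun ξ : Fin d → ℝ => m * (‖ξ‖ / K) ^ (1 / c))
      (Bornology.cobounded (Fin d → ℝ)) atTop := by
    have h1 : Tendsto (fun x : ℝ => m * (x / K) ^ (1 / c)) atTop atTop := by
      apply Tendsto.const_mul_atTop hm0
      exact (tendsto_rpow_atTop (by positivity)).comp
        (tendsto_id.atTop_div_const hK0)
    exact h1.comp tendsto_norm_cobounded_atTop
  apply tendsto_atTop_mono' _ _ hcomp
  have hev : ∀ᶠ ξ : Fin d → ℝ in Bornology.cobounded _, 1 ≤ ‖ξ‖ :=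
    tendsto_norm_cobounded_atTop.eventually_ge_atTop 1
  exact hev.mono fun ξ h => key ξ h
end

section
/- Let P : W → ℂ be a nondegenerate-homogeneous polynomial on a finite-dimensional real vector space W, and define Sym(P) = {O ∈ End(W) : P(Oξ) = P(ξ) for all ξ ∈ W}. Then Sym(P) is a compact subgroup of GL(W). -/
open Filter Topology

/-- Sum of absolute values of all entries of a matrix. -/
private def entSum {d : ℕ} (A : Matrix (Fin d) (Fin d) ℝ) : ℝ :=
  ∑ i, ∑ j, |A i j|

private lemma entSum_nonneg {d : ℕ} (A : Matrix (Fin d) (Fin d) ℝ) : 0 ≤ entSum A :=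
  Finset.sum_nonneg fun _ _ => Finset.sum_nonneg fun _ _ => abs_nonneg _

/-- Crude operator-norm bound for `mulVec` in the sup norm. -/
private lemma norm_mulVec_le {d : ℕ} (A : Matrix (Fin d) (Fin d) ℝ) (v : Fin d → ℝ) :
    ‖A.mulVec v‖ ≤ entSum A * ‖v‖ := by
  have hA : (0 : ℝ) ≤ entSum A := entSum_nonneg A
  have hv : (0 : ℝ) ≤ ‖v‖ := norm_nonneg _
  rw [pi_norm_le_iff_of_nonneg (by positivity)]
  intro i
  have hrow : A.mulVec v i = ∑ j, A i j * v j := by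
    simp [Matrix.mulVec, dotProduct]
  rw [hrow]
  calc ‖∑ j, A i j * v j‖ ≤ ∑ j, ‖A i j * v j‖ := norm_sum_le _ _
    _ ≤ ∑ j, |A i j| * ‖v‖ := by
        refine Finset.sum_le_sum fun j _ => ?_
        rw [norm_mul, Real.norm_eq_abs]
        exact mul_le_mul_of_nonneg_left (norm_le_pi_norm v j) (abs_nonneg _)
    _ = (∑ j, |A i j|) * ‖v‖ := by rw [← Finset.sum_mul]
    _ ≤ entSum A * ‖v‖ := by
        refine mul_le_mul_of_nonneg_right ?_ hv
        exact Finset.single_le_sum (f := fun k => ∑ j, |A k j|)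
          (fun k _ => Finset.sum_nonneg fun _ _ => abs_nonneg _) (Finset.mem_univ i)

/-- The symmetry set of a function P on ℝ^d: endomorphisms preserving P. -/
def SymSet {d : ℕ} (P : (Fin d → ℝ) → ℂ) : Set (Matrix (Fin d) (Fin d) ℝ) :=
  {O | ∀ ξ : Fin d → ℝ, P (O.mulVec ξ) = P ξ}

/-- For a nondegenerate-homogeneous polynomial P, Sym(P) is a compact subgroup of GL. -/
theorem symSet_compact_subgroup {d : ℕ}
    (p : MvPolynomial (Fin d) ℂ) (P : (Fin d → ℝ) → ℂ)
    (hP : ∀ ξ : Fin d → ℝ, P ξ = MvPolynomial.eval (fun i => (ξ i : ℂ)) p)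
    (hnondeg : ∀ ξ : Fin d → ℝ, ξ ≠ 0 → P ξ ≠ 0)
    (F B : Matrix (Fin d) (Fin d) ℝ) (D : Fin d → ℝ)
    (hB : IsUnit B) (hdiag : F = B * Matrix.diagonal D * B⁻¹)
    (hhom : ∀ t : ℝ, 0 < t → ∀ ξ : Fin d → ℝ,
      P ((NormedSpace.exp ((Real.log t) • F)).mulVec ξ) = (t : ℂ) * P ξ) :
    (∀ O ∈ SymSet P, IsUnit O) ∧
    IsCompact (SymSet P) ∧
    (1 : Matrix (Fin d) (Fin d) ℝ) ∈ SymSet P ∧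
    (∀ O₁ O₂, O₁ ∈ SymSet P → O₂ ∈ SymSet P → O₁ * O₂ ∈ SymSet P) ∧
    (∀ O ∈ SymSet P, O⁻¹ ∈ SymSet P) := by
  classical
  -- basic invertibility facts about B
  have hBdet : IsUnit B.det := (Matrix.isUnit_iff_isUnit_det B).mp hB
  have hBinvB : B⁻¹ * B = 1 := Matrix.nonsing_inv_mul B hBdet
  have hBBinv : B * B⁻¹ = 1 := Matrix.mul_nonsing_inv B hBdet
  have hBid : ∀ ξ : Fin d → ℝ, B.mulVec (B⁻¹.mulVec ξ) = ξ := fun ξ => by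
    rw [Matrix.mulVec_mulVec, hBBinv, Matrix.one_mulVec]
  have hBid' : ∀ ξ : Fin d → ℝ, B⁻¹.mulVec (B.mulVec ξ) = ξ := fun ξ => by
    rw [Matrix.mulVec_mulVec, hBinvB, Matrix.one_mulVec]
  -- continuity of P
  have contP : Continuous P := by
    have hPe : P = (fun x : Fin d → ℂ => MvPolynomial.eval x p) ∘
        (fun ξ (i : Fin d) => ((ξ i : ℝ) : ℂ)) := funext fun ξ => hP ξ
    rw [hPe]
    exact (MvPolynomial.continuous_eval p).comp
      (continuous_pi fun i => Complex.continuous_ofReal.comp (continuous_apply i))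
  -- P 0 = 0
  have P0 : P 0 = 0 := by
    have h := hhom 2 (by norm_num) 0
    rw [Matrix.mulVec_zero] at h
    have h2 : ((2 : ℝ) : ℂ) = (2 : ℂ) := by norm_num
    rw [h2] at h
    linear_combination -h
  -- the explicit form of exp (log t • F)
  have hexp : ∀ t : ℝ, 0 < t →
      NormedSpace.exp (Real.log t • F)
        = B * Matrix.diagonal (fun i => t ^ D i) * B⁻¹ := by
    intro t ht
    have h1 : Real.log t • F = B * Matrix.diagonal (Real.log t • D) * B⁻¹ := by
      rw [hdiag, Matrix.diagonal_smul, mul_smul_comm, smul_mul_assoc]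
    have h2 : NormedSpace.exp (Real.log t • D) = fun i => t ^ D i := by
      rw [Pi.exp_def]
      funext i
      rw [← Real.exp_eq_exp_ℝ]
      simp only [Pi.smul_apply, smul_eq_mul]
      rw [Real.rpow_def_of_pos ht]
    rw [h1, Matrix.exp_conj B _ hB, Matrix.exp_diagonal, h2]
  have hH : ∀ t : ℝ, 0 < t → ∀ ξ : Fin d → ℝ,
      P ((B * Matrix.diagonal (fun i => t ^ D i) * B⁻¹).mulVec ξ) = (t : ℂ) * P ξ := by
    intro t ht ξ
    rw [← hexp t ht]
    exact hhom t ht ξ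
  -- action of the conjugated diagonal on B-images
  have hact : ∀ (w : Fin d → ℝ) (v : Fin d → ℝ),
      (B * Matrix.diagonal w * B⁻¹).mulVec (B.mulVec v) = B.mulVec (fun i => w i * v i) := by
    intro w v
    rw [Matrix.mulVec_mulVec, Matrix.mul_assoc (B * Matrix.diagonal w) B⁻¹ B, hBinvB, mul_one,
      ← Matrix.mulVec_mulVec]
    have harg : (Matrix.diagonal w).mulVec v = fun i => w i * v i :=
      funext fun i => Matrix.mulVec_diagonal w v i
    rw [harg]
  -- positivity of the eigenvalues D i
  have hDpos : ∀ i, 0 < D i := by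
    intro i
    set v := B.mulVec (Pi.single i 1) with hv
    have hv0 : v ≠ 0 := by
      intro h
      have h2 : B⁻¹.mulVec v = Pi.single i 1 := hBid' _
      rw [h, Matrix.mulVec_zero] at h2
      have := congrFun h2 i
      simp [Pi.single_eq_same] at this
    have hs : ∀ t : ℝ, 0 < t → P ((t ^ D i) • v) = (t : ℂ) * P v := by
      intro t ht
      have h := hH t ht v
      rw [hv, hact] at h
      have h3 : (fun j => t ^ D j * (Pi.single i 1 : Fin d → ℝ) j)
          = (t ^ D i) • (Pi.single i 1 : Fin d → ℝ) := by
        funext j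
        by_cases hji : j = i
        · subst hji; simp
        · simp [Pi.single_eq_of_ne hji]
      rw [h3, Matrix.mulVec_smul] at h
      exact h
    by_contra hDi
    push_neg at hDi
    rcases eq_or_lt_of_le hDi with heq | hlt
    · have h := hs 2 (by norm_num)
      rw [heq, Real.rpow_zero, one_smul] at h
      have h2 : ((2 : ℝ) : ℂ) = (2 : ℂ) := by norm_num
      rw [h2] at h
      exact hnondeg v hv0 (by linear_combination -h)
    · have hPv : P v ≠ 0 := hnondeg v hv0
      have h1 : Tendsto (fun t : ℝ => t ^ D i) atTop (𝓝 0) := by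
        have := tendsto_rpow_neg_atTop (neg_pos.mpr hlt)
        simpa [neg_neg] using this
      have h2 : Continuous fun s : ℝ => P (s • v) :=
        contP.comp (continuous_id.smul continuous_const)
      have hq : Tendsto (fun t : ℝ => P ((t ^ D i) • v)) atTop (𝓝 0) := by
        have := (h2.tendsto 0).comp h1
        simpa [Function.comp_def, zero_smul, P0] using this
      have hq' : Tendsto (fun t : ℝ => (t : ℂ) * P v) atTop (𝓝 0) := by
        refine hq.congr' ?_
        filter_upwards [eventually_gt_atTop (0:ℝ)] with t ht
        exact hs t ht
      have hqn : Tendsto (fun t : ℝ => ‖(t : ℂ) * P v‖) atTop (𝓝 0) := by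
        simpa using hq'.norm
      have hev : ∀ᶠ t : ℝ in atTop, ‖(t : ℂ) * P v‖ < ‖P v‖ :=
        hqn.eventually_lt_const (norm_pos_iff.mpr hPv)
      obtain ⟨t, ht1, ht2⟩ := (hev.and (eventually_ge_atTop (1:ℝ))).exists
      have hnorm : ‖(t : ℂ) * P v‖ = |t| * ‖P v‖ := by
        rw [norm_mul, Complex.norm_real, Real.norm_eq_abs]
      rw [hnorm, abs_of_pos (lt_of_lt_of_le one_pos ht2)] at ht1
      nlinarith [norm_pos_iff.mpr hPv]
  -- invertibility of elements of SymSet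
  have hunit : ∀ O ∈ SymSet P, IsUnit O := by
    intro O hO
    by_contra h
    have hdet : O.det = 0 := by
      by_contra hdne
      exact h ((Matrix.isUnit_iff_isUnit_det O).mpr (isUnit_iff_ne_zero.mpr hdne))
    obtain ⟨w, hw0, hw⟩ := Matrix.exists_mulVec_eq_zero_iff.mpr hdet
    have := hO w
    rw [hw, P0] at this
    exact hnondeg w hw0 this.symm
  -- group properties
  have hone : (1 : Matrix (Fin d) (Fin d) ℝ) ∈ SymSet P := by
    intro ξ; rw [Matrix.one_mulVec]
  have hmul : ∀ O₁ O₂, O₁ ∈ SymSet P → O₂ ∈ SymSet P → O₁ * O₂ ∈ SymSet P := by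
    intro O₁ O₂ h1 h2 ξ
    rw [← Matrix.mulVec_mulVec, h1, h2]
  have hinv : ∀ O ∈ SymSet P, O⁻¹ ∈ SymSet P := by
    intro O hO ξ
    have hOdet : IsUnit O.det := (Matrix.isUnit_iff_isUnit_det O).mp (hunit O hO)
    have := hO (O⁻¹.mulVec ξ)
    rw [Matrix.mulVec_mulVec, Matrix.mul_nonsing_inv O hOdet, Matrix.one_mulVec] at this
    exact this.symm
  -- closedness of SymSet
  have hclosed : IsClosed (SymSet P) := by
    have : SymSet P = ⋂ ξ : Fin d → ℝ, {O : Matrix (Fin d) (Fin d) ℝ | P (O.mulVec ξ) = P ξ} := by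
      ext O; simp [SymSet, Set.mem_iInter]
    rw [this]
    refine isClosed_iInter fun ξ => isClosed_eq ?_ continuous_const
    exact contP.comp (continuous_id.matrix_mulVec continuous_const)
  -- compactness
  refine ⟨hunit, ?_, hone, hmul, hinv⟩
  rcases Nat.eq_zero_or_pos d with hd | hd
  · subst hd
    exact Set.Subsingleton.isCompact (Set.subsingleton_of_subsingleton)
  · haveI : Nonempty (Fin d) := ⟨⟨0, hd⟩⟩
    -- min and max of ‖P‖ on the unit sphere
    have hsc : IsCompact (Metric.sphere (0 : Fin d → ℝ) 1) := isCompact_sphere 0 1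
    have hsne : (Metric.sphere (0 : Fin d → ℝ) 1).Nonempty :=
      NormedSpace.sphere_nonempty.mpr zero_le_one
    have hcontn : ContinuousOn (fun ξ : Fin d → ℝ => ‖P ξ‖) (Metric.sphere 0 1) :=
      (contP.norm).continuousOn
    obtain ⟨ξm, hξm, hminOn⟩ := hsc.exists_isMinOn hsne hcontn
    obtain ⟨ξM, hξM, hmaxOn⟩ := hsc.exists_isMaxOn hsne hcontn
    have hmin : ∀ η ∈ Metric.sphere (0 : Fin d → ℝ) 1, ‖P ξm‖ ≤ ‖P η‖ := fun η hη => hminOn hη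
    have hmax : ∀ η ∈ Metric.sphere (0 : Fin d → ℝ) 1, ‖P η‖ ≤ ‖P ξM‖ := fun η hη => hmaxOn hη
    set m := ‖P ξm‖ with hmdef
    set M := ‖P ξM‖ with hMdef
    have hm : 0 < m := by
      have hne : ξm ≠ 0 := by
        intro h
        rw [h] at hξm
        simp at hξm
      exact norm_pos_iff.mpr (hnondeg _ hne)
    have hM0 : 0 ≤ M := norm_nonneg _
    -- Claim A: every nonzero vector is (H t) η for some t > 0 and unit vector η
    have claimA : ∀ ξ : Fin d → ℝ, ξ ≠ 0 → ∃ t : ℝ, 0 < t ∧ ∃ η : Fin d → ℝ, ‖η‖ = 1 ∧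
        (B * Matrix.diagonal (fun i => t ^ D i) * B⁻¹).mulVec η = ξ := by
      intro ξ hξ0
      set ζ := B⁻¹.mulVec ξ with hζ
      have hζ0 : ζ ≠ 0 := by
        intro h
        apply hξ0
        rw [← hBid ξ, ← hζ, h, Matrix.mulVec_zero]
      obtain ⟨i₀, hi₀⟩ := Function.ne_iff.mp hζ0
      have hi₀' : (0:ℝ) < |ζ i₀| := abs_pos.mpr hi₀
      set f : ℝ → ℝ := fun s => ‖B.mulVec (fun i => s ^ D i * ζ i)‖ with hf
      have hf0 : f 0 = 0 := by
        have hz : (fun i => (0:ℝ) ^ D i * ζ i) = (0 : Fin d → ℝ) := by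
          funext i
          simp [Real.zero_rpow (ne_of_gt (hDpos i))]
        rw [hf]
        simp only [hz, Matrix.mulVec_zero, norm_zero]
      have hfcont : ∀ x : ℝ, 0 ≤ x → ContinuousAt f x := by
        intro x hx
        have h1 : ContinuousAt (fun s : ℝ => (fun i => s ^ D i * ζ i)) x := by
          rw [continuousAt_pi]
          intro i
          exact (Real.continuousAt_rpow_const x (D i)
            (Or.inr (le_of_lt (hDpos i)))).mul continuousAt_const
        have h2 : Continuous fun w : Fin d → ℝ => ‖B.mulVec w‖ :=
          (continuous_const.matrix_mulVec continuous_id).norm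
        exact h2.continuousAt.comp h1
      -- find b with 1 ≤ f b
      have hbig : Tendsto (fun s : ℝ => s ^ D i₀ * |ζ i₀|) atTop atTop :=
        (tendsto_rpow_atTop (hDpos i₀)).atTop_mul_const hi₀'
      obtain ⟨N, hN⟩ := eventually_atTop.mp (hbig.eventually_ge_atTop (entSum B⁻¹ + 1))
      set b := max N 1 with hb
      have hb1 : (1:ℝ) ≤ b := le_max_right _ _
      have hb0 : (0:ℝ) ≤ b := le_trans zero_le_one hb1
      have hfb : 1 ≤ f b := by
        set w : Fin d → ℝ := fun i => b ^ D i * ζ i with hw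
        have hwζ : |w i₀| ≤ ‖w‖ := by
          have := norm_le_pi_norm w i₀
          simpa [Real.norm_eq_abs] using this
        have hwB : ‖w‖ ≤ entSum B⁻¹ * f b := by
          calc ‖w‖ = ‖B⁻¹.mulVec (B.mulVec w)‖ := by rw [hBid' w]
            _ ≤ entSum B⁻¹ * ‖B.mulVec w‖ := norm_mulVec_le _ _
            _ = entSum B⁻¹ * f b := rfl
        have hlow : entSum B⁻¹ + 1 ≤ |w i₀| := by
          have hNb := hN b (le_max_left _ _)
          calc entSum B⁻¹ + 1 ≤ b ^ D i₀ * |ζ i₀| := hNb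
            _ = |w i₀| := by
                rw [hw, abs_mul,
                  abs_of_pos (Real.rpow_pos_of_pos (lt_of_lt_of_le one_pos hb1) _)]
        have hfb0 : (0:ℝ) ≤ f b := norm_nonneg _
        nlinarith [entSum_nonneg (B⁻¹ : Matrix (Fin d) (Fin d) ℝ)]
      -- IVT
      have hIcc : ContinuousOn f (Set.Icc 0 b) := fun x hx =>
        (hfcont x hx.1).continuousWithinAt
      have h1mem : (1:ℝ) ∈ Set.Icc (f 0) (f b) := ⟨by rw [hf0]; exact zero_le_one, hfb⟩
      obtain ⟨s, hsmem, hfs⟩ := intermediate_value_Icc hb0 hIcc h1mem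
      have hs0 : 0 < s := by
        rcases lt_or_eq_of_le hsmem.1 with h | h
        · exact h
        · exfalso; rw [← h, hf0] at hfs; exact one_ne_zero hfs.symm
      refine ⟨s⁻¹, inv_pos.mpr hs0, B.mulVec (fun i => s ^ D i * ζ i), hfs, ?_⟩
      rw [hact]
      have hcanc : (fun i => (s⁻¹) ^ D i * (s ^ D i * ζ i)) = ζ := by
        funext i
        rw [Real.inv_rpow (le_of_lt hs0)]
        exact inv_mul_cancel_left₀ (ne_of_gt (Real.rpow_pos_of_pos hs0 _)) _
      rw [hcanc]
      exact hBid ξ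
    -- the uniform bound
    set T := M / m with hT
    have hT0 : 0 ≤ T := div_nonneg hM0 (le_of_lt hm)
    set K : ℝ := ∑ i : Fin d, T ^ D i with hK
    have hK0 : 0 ≤ K := Finset.sum_nonneg fun i _ => Real.rpow_nonneg hT0 _
    set C : ℝ := entSum B * (K * entSum B⁻¹) with hC
    have hC0 : 0 ≤ C := by
      have := entSum_nonneg B
      have := entSum_nonneg (B⁻¹ : Matrix (Fin d) (Fin d) ℝ)
      positivity
    have hball : ∀ O ∈ SymSet P, ∀ ξ : Fin d → ℝ, ‖ξ‖ = 1 → ‖O.mulVec ξ‖ ≤ C := by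
      intro O hO ξ hξ1
      have hξ0 : ξ ≠ 0 := by
        intro h; rw [h, norm_zero] at hξ1; exact one_ne_zero hξ1.symm
      have hOξ0 : O.mulVec ξ ≠ 0 := by
        intro hz
        have := hO ξ
        rw [hz, P0] at this
        exact hnondeg ξ hξ0 this.symm
      obtain ⟨t, ht, η, hη1, heq⟩ := claimA _ hOξ0
      -- norms of P
      have hPval : (t : ℂ) * P η = P ξ := by
        have h1 := hH t ht η
        rw [heq, hO ξ] at h1
        exact h1.symm
      have hPn : t * ‖P η‖ = ‖P ξ‖ := by
        have := congrArg norm hPval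
        rwa [norm_mul, Complex.norm_real, Real.norm_eq_abs, abs_of_pos ht] at this
      have hPηm : m ≤ ‖P η‖ := hmin η (by rwa [mem_sphere_zero_iff_norm])
      have hPξM : ‖P ξ‖ ≤ M := hmax ξ (by rwa [mem_sphere_zero_iff_norm])
      have htT : t ≤ T := by
        rw [hT, le_div_iff₀ hm]
        nlinarith
      -- norm bound on (H t) η
      rw [← heq]
      have hsplit : (B * Matrix.diagonal (fun i => t ^ D i) * B⁻¹).mulVec η
          = B.mulVec ((Matrix.diagonal (fun i => t ^ D i)).mulVec (B⁻¹.mulVec η)) := by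
        rw [Matrix.mulVec_mulVec, Matrix.mulVec_mulVec, Matrix.mul_assoc]
      rw [hsplit]
      set u := B⁻¹.mulVec η with hu
      have hu1 : ‖u‖ ≤ entSum B⁻¹ := by
        have := norm_mulVec_le (B⁻¹ : Matrix (Fin d) (Fin d) ℝ) η
        rwa [hη1, mul_one] at this
      have hdiagbd : ‖(Matrix.diagonal (fun i => t ^ D i)).mulVec u‖ ≤ K * ‖u‖ := by
        rw [pi_norm_le_iff_of_nonneg (by positivity)]
        intro i
        have h1 : (Matrix.diagonal (fun i => t ^ D i)).mulVec u i = t ^ D i * u i :=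
          Matrix.mulVec_diagonal _ _ _
        rw [h1, Real.norm_eq_abs, abs_mul,
          abs_of_pos (Real.rpow_pos_of_pos ht _)]
        have h2 : t ^ D i ≤ T ^ D i :=
          Real.rpow_le_rpow (le_of_lt ht) htT (le_of_lt (hDpos i))
        have h3 : T ^ D i ≤ K := by
          rw [hK]
          exact Finset.single_le_sum (fun j _ => Real.rpow_nonneg hT0 _) (Finset.mem_univ i)
        have h4 : |u i| ≤ ‖u‖ := by
          have := norm_le_pi_norm u i
          simpa [Real.norm_eq_abs] using this
        have h5 : 0 ≤ t ^ D i := le_of_lt (Real.rpow_pos_of_pos ht _)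
        nlinarith [norm_nonneg u]
      calc ‖B.mulVec ((Matrix.diagonal (fun i => t ^ D i)).mulVec u)‖
          ≤ entSum B * ‖(Matrix.diagonal (fun i => t ^ D i)).mulVec u‖ :=
            norm_mulVec_le _ _
        _ ≤ entSum B * (K * ‖u‖) :=
            mul_le_mul_of_nonneg_left hdiagbd (entSum_nonneg B)
        _ ≤ C := by
            rw [hC]
            exact mul_le_mul_of_nonneg_left
              (mul_le_mul_of_nonneg_left hu1 hK0) (entSum_nonneg B)
    -- entrywise bound and conclusion
    have hent : ∀ O ∈ SymSet P, ∀ i j, |O i j| ≤ C := by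
      intro O hO i j
      have h2 : ‖O.mulVec (Pi.single j 1)‖ ≤ C := by
        refine hball O hO _ ?_
        rw [Pi.norm_single]
        exact norm_one
      have h1 : O.mulVec (Pi.single j 1) i = O i j := by
        rw [Matrix.mulVec_single_one O j]
        rfl
      calc |O i j| = ‖O.mulVec (Pi.single j 1) i‖ := by rw [h1, Real.norm_eq_abs]
        _ ≤ ‖O.mulVec (Pi.single j 1)‖ := norm_le_pi_norm _ i
        _ ≤ C := h2
    have hKc : IsCompact ((Set.univ.pi fun _ : Fin d => Set.univ.pi fun _ : Fin d =>
        Set.Icc (-C) C) : Set (Matrix (Fin d) (Fin d) ℝ)) :=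
      isCompact_univ_pi fun _ => isCompact_univ_pi fun _ => isCompact_Icc
    refine hKc.of_isClosed_subset hclosed ?_
    intro O hO
    simp only [Set.mem_pi, Set.mem_univ, forall_true_left, Set.mem_Icc]
    intro i j
    exact abs_le.mp (hent O hO i j)
end

section
/- Let P : W → ℂ be a nondegenerate-homogeneous polynomial on a finite-dimensional real vector space W, and let F₁, F₂ be two endomorphisms of W such that P(t^{Fᵢ}ξ) = t·P(ξ) for all t > 0, ξ ∈ W (i = 1, 2). Then trace(F₁) = trace(F₂). -/
set_option maxHeartbeats 1000000

open NormedSpace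

/-- Determinant of the matrix exponential equals the exponential of the trace. -/
lemma my_det_exp {d : ℕ} (M : Matrix (Fin d) (Fin d) ℝ) :
    (NormedSpace.exp M).det = Real.exp M.trace := by
  letI : SeminormedRing (Matrix (Fin d) (Fin d) ℝ) := Matrix.linftyOpSemiNormedRing
  letI : NormedRing (Matrix (Fin d) (Fin d) ℝ) := Matrix.linftyOpNormedRing
  letI : NormedAlgebra ℝ (Matrix (Fin d) (Fin d) ℝ) := Matrix.linftyOpNormedAlgebra
  set f : ℝ → ℝ := fun t => (exp (t • M)).det with hfdef
  have hentry : ∀ (t : ℝ) (i j : Fin d),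
      HasDerivAt (fun u : ℝ => exp (u • M) i j) ((exp (t • M) * M) i j) t := by
    intro t i j
    have h1 : HasDerivAt (fun u : ℝ => exp (u • M)) (exp (t • M) * M) t :=
      hasDerivAt_exp_smul_const M t
    let L : Matrix (Fin d) (Fin d) ℝ →ₗ[ℝ] ℝ :=
      { toFun := fun A => A i j, map_add' := fun _ _ => rfl, map_smul' := fun _ _ => rfl }
    exact (L.toContinuousLinearMap.hasFDerivAt.comp_hasDerivAt t h1 :)
  have hexp0 : exp ((0:ℝ) • M) = (1 : Matrix (Fin d) (Fin d) ℝ) := by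
    rw [zero_smul, exp_zero]
  have h0 : HasDerivAt f M.trace 0 := by
    have hform : f = fun t => ∑ σ : Equiv.Perm (Fin d),
        ((Equiv.Perm.sign σ : ℤ) : ℝ) * ∏ i, exp (t • M) (σ i) i := by
      funext t; rw [hfdef]; exact Matrix.det_apply' _
    rw [hform]
    have hsum : HasDerivAt (fun t : ℝ => ∑ σ : Equiv.Perm (Fin d),
        ((Equiv.Perm.sign σ : ℤ) : ℝ) * ∏ i, exp (t • M) (σ i) i)
        (∑ σ : Equiv.Perm (Fin d), ((Equiv.Perm.sign σ : ℤ) : ℝ) *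
          (∑ i, (∏ j ∈ Finset.univ.erase i, exp ((0:ℝ) • M) (σ j) j) • ((exp ((0:ℝ) • M) * M) (σ i) i))) 0 := by
      apply HasDerivAt.fun_sum
      intro σ _
      exact ((HasDerivAt.fun_finsetProd (fun j _ => hentry 0 (σ j) j))).const_mul _
    convert hsum using 1
    rw [hexp0]
    rw [Finset.sum_eq_single (1 : Equiv.Perm (Fin d))]
    · simp only [Equiv.Perm.sign_one, Units.val_one, Int.cast_one, one_mul, smul_eq_mul,
        Equiv.Perm.one_apply, Matrix.trace, Matrix.diag]
      refine Finset.sum_congr rfl fun x _ => ?_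
      have h1 : ∀ j ∈ Finset.univ.erase x,
          (1 : Matrix (Fin d) (Fin d) ℝ) ((1 : Equiv.Perm (Fin d)) j) j = 1 := by
        intro j _
        rw [Equiv.Perm.one_apply, Matrix.one_apply_eq]
      rw [Finset.prod_congr rfl h1, Finset.prod_const_one, one_mul]
    · intro σ _ hσ
      have : ∀ i : Fin d, (∏ j ∈ Finset.univ.erase i, (1 : Matrix (Fin d) (Fin d) ℝ) (σ j) j) = 0 := by
        intro i
        have hex : ∃ j, j ≠ i ∧ σ j ≠ j := by
          by_contra hc
          push_neg at hc
          apply hσ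
          have hfix : ∀ j, j ≠ i → σ j = j := hc
          have hi : σ i = i := by
            by_contra hii
            have h2 : σ (σ i) = σ i := hfix (σ i) hii
            exact hii (σ.injective h2)
          refine Equiv.ext fun j => ?_
          rw [Equiv.Perm.one_apply]
          rcases eq_or_ne j i with rfl | hji
          · exact hi
          · exact hfix j hji
        obtain ⟨j, hji, hsj⟩ := hex
        refine Finset.prod_eq_zero (Finset.mem_erase.mpr ⟨hji, Finset.mem_univ j⟩) ?_
        exact Matrix.one_apply_ne hsj
      simp only [this, smul_eq_mul]
      simp
    · simp
  have hmul : ∀ s t : ℝ, f (s + t) = f s * f t := by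
    intro s t
    rw [hfdef]
    simp only
    rw [add_smul, Matrix.exp_add_of_commute _ _ (((Commute.refl M).smul_left s).smul_right t), Matrix.det_mul]
  have hevery : ∀ t : ℝ, HasDerivAt f (M.trace * f t) t := by
    intro t
    have h00 : HasDerivAt f M.trace (t - t) := by rwa [sub_self]
    have hD : HasDerivAt (fun x : ℝ => f (x - t)) M.trace t := h00.comp_sub_const t t
    have hE : HasDerivAt (fun x : ℝ => f t * f (x - t)) (f t * M.trace) t := hD.const_mul (f t)
    have heq : (fun x : ℝ => f t * f (x - t)) = f := by
      funext x
      rw [← hmul t (x - t), add_sub_cancel]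
    rw [heq] at hE
    simpa [mul_comm] using hE
  set c := M.trace with hc
  have hg' : ∀ t : ℝ, HasDerivAt (fun t => f t * Real.exp (-(c * t))) 0 t := by
    intro t
    have e1 : HasDerivAt (fun t : ℝ => -(c * t)) (-c) t := by
      simpa using ((hasDerivAt_id t).const_mul c).fun_neg
    have e2 : HasDerivAt (fun t : ℝ => Real.exp (-(c * t)))
        (Real.exp (-(c * t)) * -c) t := e1.exp
    have := (hevery t).fun_mul e2
    convert this using 1
    any_goals rfl
    ring
  have hconst : ∀ t : ℝ, f t * Real.exp (-(c * t)) = f 0 * Real.exp (-(c * 0)) := by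
    intro t
    exact is_const_of_deriv_eq_zero (fun x => (hg' x).differentiableAt)
      (fun x => (hg' x).deriv) t 0
  have hf0 : f 0 = 1 := by rw [hfdef]; simp only; rw [hexp0, Matrix.det_one]
  have h1 := hconst 1
  rw [hf0] at h1
  simp only [mul_zero, neg_zero, Real.exp_zero, mul_one, one_mul] at h1
  have hfinal : f 1 = Real.exp c := by
    have := congrArg (fun x => x * Real.exp (c * 1)) h1
    rw [mul_assoc, ← Real.exp_add] at this
    simpa using this
  rw [hfdef] at hfinal
  simpa using hfinal

lemma my_exp_conj {d : ℕ} (F B : Matrix (Fin d) (Fin d) ℝ) (D : Fin d → ℝ)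
    (hB : IsUnit B) (hdiag : F = B * Matrix.diagonal D * B⁻¹) (s : ℝ) :
    NormedSpace.exp (s • F) =
      B * Matrix.diagonal (fun i => Real.exp (s * D i)) * B⁻¹ := by
  have h1 : s • F = B * Matrix.diagonal (fun i => s * D i) * B⁻¹ := by
    rw [hdiag, ← Matrix.smul_mul, ← Matrix.mul_smul, ← Matrix.diagonal_smul]
    rfl
  rw [h1, Matrix.exp_conj B _ hB, Matrix.exp_diagonal, Pi.exp_def]
  have : (fun i => exp (s * D i)) = fun i => Real.exp (s * D i) :=
    funext fun i => (congrFun Real.exp_eq_exp_ℝ _).symm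
  rw [this]

lemma my_diag_mulVec {d : ℕ} (v w : Fin d → ℝ) :
    (Matrix.diagonal v).mulVec w = fun i => v i * w i := by
  funext i
  rw [Matrix.mulVec_diagonal]

lemma my_mulVec_cancel {d : ℕ} (B : Matrix (Fin d) (Fin d) ℝ) (hB : IsUnit B)
    (v : Fin d → ℝ) : B⁻¹.mulVec (B.mulVec v) = v := by
  rw [Matrix.mulVec_mulVec, Matrix.nonsing_inv_mul _ ((Matrix.isUnit_iff_isUnit_det B).mp hB),
    Matrix.one_mulVec]

lemma my_mulVec_cancel' {d : ℕ} (B : Matrix (Fin d) (Fin d) ℝ) (hB : IsUnit B)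
    (v : Fin d → ℝ) : B.mulVec (B⁻¹.mulVec v) = v := by
  rw [Matrix.mulVec_mulVec, Matrix.mul_nonsing_inv _ ((Matrix.isUnit_iff_isUnit_det B).mp hB),
    Matrix.one_mulVec]

lemma my_mulVec_ne_zero {d : ℕ} (B : Matrix (Fin d) (Fin d) ℝ) (hB : IsUnit B)
    (v : Fin d → ℝ) (hv : v ≠ 0) : B.mulVec v ≠ 0 := by
  intro h
  apply hv
  have := my_mulVec_cancel B hB v
  rw [h, Matrix.mulVec_zero] at this
  exact this.symm

/-- For a nondegenerate-homogeneous polynomial P, any two members of Exp(P) have the same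
trace. -/
theorem trace_eq_of_mem_exp {d : ℕ}
    (p : MvPolynomial (Fin d) ℂ) (P : (Fin d → ℝ) → ℂ)
    (hP : ∀ ξ : Fin d → ℝ, P ξ = MvPolynomial.eval (fun i => (ξ i : ℂ)) p)
    (hnondeg : ∀ ξ : Fin d → ℝ, ξ ≠ 0 → P ξ ≠ 0)
    -- Exp(P) contains a diagonalizable endomorphism:
    (F B : Matrix (Fin d) (Fin d) ℝ) (D : Fin d → ℝ)
    (hB : IsUnit B) (hdiag : F = B * Matrix.diagonal D * B⁻¹)
    (hFhom : ∀ t : ℝ, 0 < t → ∀ ξ : Fin d → ℝ,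
      P ((NormedSpace.exp ((Real.log t) • F)).mulVec ξ) = (t : ℂ) * P ξ)
    -- F₁, F₂ ∈ Exp(P):
    (F₁ F₂ : Matrix (Fin d) (Fin d) ℝ)
    (hF₁ : ∀ t : ℝ, 0 < t → ∀ ξ : Fin d → ℝ,
      P ((NormedSpace.exp ((Real.log t) • F₁)).mulVec ξ) = (t : ℂ) * P ξ)
    (hF₂ : ∀ t : ℝ, 0 < t → ∀ ξ : Fin d → ℝ,
      P ((NormedSpace.exp ((Real.log t) • F₂)).mulVec ξ) = (t : ℂ) * P ξ) :
    F₁.trace = F₂.trace := by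
  rcases Nat.eq_zero_or_pos d with hd | hd
  · subst hd
    simp [Matrix.trace]
  -- Preliminaries
  haveI : Nonempty (Fin d) := ⟨⟨0, hd⟩⟩
  have hPcont : Continuous P := by
    have hPe : P = fun ξ => MvPolynomial.eval (fun i => ((ξ i : ℝ) : ℂ)) p := funext hP
    rw [hPe]
    simp only [MvPolynomial.eval_eq]
    refine continuous_finset_sum _ fun m _ => Continuous.mul continuous_const
      (continuous_finset_prod _ fun i _ =>
        ((Complex.continuous_ofReal.comp (continuous_apply i)).pow _))
  have hP0 : P 0 = 0 := by
    have h := hF₁ 2 (by norm_num) 0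
    rw [Matrix.mulVec_zero] at h
    have h2 : P 0 = 2 * P 0 := by exact_mod_cast h
    linear_combination -h2
  -- key scaling identity in diagonal coordinates
  have hkey : ∀ s : ℝ, ∀ v : Fin d → ℝ,
      P (B.mulVec (fun i => Real.exp (s * D i) * v i)) =
        Complex.ofReal (Real.exp s) * P (B.mulVec v) := by
    intro s v
    have h := hFhom (Real.exp s) (Real.exp_pos s) (B.mulVec v)
    rw [Real.log_exp, my_exp_conj F B D hB hdiag s] at h
    have hrw : (B * Matrix.diagonal (fun i => Real.exp (s * D i)) * B⁻¹).mulVec (B.mulVec v)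
        = B.mulVec (fun i => Real.exp (s * D i) * v i) := by
      rw [Matrix.mulVec_mulVec, mul_assoc, Matrix.nonsing_inv_mul _
        ((Matrix.isUnit_iff_isUnit_det B).mp hB), mul_one, ← Matrix.mulVec_mulVec,
        my_diag_mulVec]
    rw [hrw] at h
    exact h
  -- all diagonal entries are positive
  have hDpos : ∀ i, 0 < D i := by
    intro i
    have hsingle : (Pi.single i 1 : Fin d → ℝ) ≠ 0 := by
      intro h
      have := congrFun h i
      simp at this
    set c := P (B.mulVec (Pi.single i 1)) with hcdef
    have hc : c ≠ 0 := hnondeg _ (my_mulVec_ne_zero B hB _ hsingle)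
    have hq : ∀ s : ℝ, P (B.mulVec (Pi.single i (Real.exp (s * D i)))) =
        Complex.ofReal (Real.exp s) * c := by
      intro s
      have h := hkey s (Pi.single i 1)
      have hfun : (fun j => Real.exp (s * D j) * (Pi.single i 1 : Fin d → ℝ) j)
          = Pi.single i (Real.exp (s * D i)) := by
        funext j
        simp only [Pi.single_apply]
        rcases eq_or_ne j i with rfl | hji
        · simp
        · simp [hji]
      rw [hfun] at h
      exact h
    by_contra hnot
    push_neg at hnot
    rcases eq_or_lt_of_le hnot with heq | hlt
    · -- D i = 0
      have h1 := hq 1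
      rw [heq, mul_zero, Real.exp_zero] at h1
      have h2 : ((Real.exp 1 : ℂ) - 1) * c = 0 := by linear_combination -h1
      rcases mul_eq_zero.mp h2 with h3 | h3
      · have he : (Real.exp 1 : ℂ) = 1 := by
          have := sub_eq_zero.mp h3
          exact this
        have he' : Real.exp 1 = 1 := by exact_mod_cast he
        have := Real.exp_one_gt_d9
        linarith
      · exact absurd h3 hc
    · -- D i < 0
      have hmv : Continuous fun u : ℝ => B.mulVec (Pi.single i u) := by
        refine continuous_pi fun j => ?_
        have : (fun u : ℝ => B.mulVec (Pi.single i u) j) = fun u => B j i * u := by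
          funext u
          rw [Matrix.mulVec_single]
          rfl
        rw [this]
        exact continuous_const.mul continuous_id
      have hcont : Continuous fun u : ℝ => P (B.mulVec (Pi.single i u)) := hPcont.comp hmv
      obtain ⟨C, hC⟩ := (isCompact_Icc (a := (0:ℝ)) (b := 1)).exists_bound_of_continuousOn
        hcont.continuousOn
      have hC0 : 0 ≤ C := le_trans (norm_nonneg _) (hC 0 ⟨le_refl _, zero_le_one⟩)
      have hcpos : 0 < ‖c‖ := norm_pos_iff.mpr hc
      set s := max 0 (Real.log ((C + 1) / ‖c‖)) with hsdef
      have hs0 : (0:ℝ) ≤ s := le_max_left _ _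
      have hmem : Real.exp (s * D i) ∈ Set.Icc (0:ℝ) 1 := by
        constructor
        · exact (Real.exp_pos _).le
        · rw [Real.exp_le_one_iff]
          exact mul_nonpos_of_nonneg_of_nonpos hs0 hlt.le
      have h2 := hC _ hmem
      rw [hq s] at h2
      have h3 : ‖(Real.exp s : ℂ) * c‖ = Real.exp s * ‖c‖ := by
        rw [norm_mul, Complex.norm_real, Real.norm_eq_abs, abs_of_pos (Real.exp_pos s)]
      rw [h3] at h2
      have h4 : (C + 1) / ‖c‖ ≤ Real.exp s := by
        calc (C + 1) / ‖c‖ = Real.exp (Real.log ((C + 1) / ‖c‖)) := by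
              rw [Real.exp_log (div_pos (by linarith) hcpos)]
        _ ≤ Real.exp s := Real.exp_le_exp.mpr (le_max_right _ _)
      have h5 : C + 1 ≤ Real.exp s * ‖c‖ := by
        rw [div_le_iff₀ hcpos] at h4
        linarith
      linarith
  -- minimum of |P ∘ B| on the unit sphere
  set Sq : Set (Fin d → ℝ) := {w | ∑ i, (w i)^2 = 1} with hSqdef
  have hmvB : Continuous fun w : Fin d → ℝ => B.mulVec w := by
    have : (fun w : Fin d → ℝ => B.mulVec w) = fun w => B.mulVecLin w := by
      funext w; rw [Matrix.mulVecLin_apply]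
    rw [this]
    exact B.mulVecLin.continuous_of_finiteDimensional
  have habs : Continuous fun w : Fin d → ℝ => ‖P (B.mulVec w)‖ :=
    continuous_norm.comp (hPcont.comp hmvB)
  have hSqclosed : IsClosed Sq :=
    isClosed_eq (continuous_finset_sum _ fun i _ => (continuous_apply i).pow 2) continuous_const
  have hSqsub : ∀ w ∈ Sq, ∀ i, |w i| ≤ 1 := by
    intro w hw i
    have h1 : (w i)^2 ≤ 1 := by
      have := Finset.single_le_sum (f := fun j => (w j)^2) (fun j _ => sq_nonneg _)
        (Finset.mem_univ i)
      rw [hw] at this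
      exact this
    exact abs_le.mpr ⟨by nlinarith, by nlinarith⟩
  have hSqbounded : Bornology.IsBounded Sq := by
    rw [isBounded_iff_forall_norm_le]
    refine ⟨1, fun w hw => ?_⟩
    rw [pi_norm_le_iff_of_nonneg zero_le_one]
    intro i
    rw [Real.norm_eq_abs]
    exact hSqsub w hw i
  have hSqcompact : IsCompact Sq := Metric.isCompact_of_isClosed_isBounded hSqclosed hSqbounded
  have hSqne : (Pi.single ⟨0, hd⟩ 1 : Fin d → ℝ) ∈ Sq := by
    rw [hSqdef]
    simp [Pi.single_apply, Finset.sum_ite_eq']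
  obtain ⟨w₀, hw₀S, hw₀min'⟩ := hSqcompact.exists_isMinOn ⟨_, hSqne⟩ habs.continuousOn
  have hw₀min := isMinOn_iff.mp hw₀min'
  set m := ‖P (B.mulVec w₀)‖ with hmdef
  have hw₀ne : w₀ ≠ 0 := by
    intro h
    rw [hSqdef] at hw₀S
    simp only [Set.mem_setOf_eq, h] at hw₀S
    simp at hw₀S
  have hm : 0 < m := by
    rw [hmdef]
    exact norm_pos_iff.mpr (hnondeg _ (my_mulVec_ne_zero B hB _ hw₀ne))
  -- bound on the sublevel set
  obtain ⟨CB, hCB⟩ : ∃ CB : ℝ, ∀ v : Fin d → ℝ, ‖B.mulVec v‖ ≤ CB * ‖v‖ := by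
    refine ⟨‖LinearMap.toContinuousLinearMap B.mulVecLin‖, fun v => ?_⟩
    have := (LinearMap.toContinuousLinearMap B.mulVecLin).le_opNorm v
    simpa [Matrix.mulVecLin_apply] using this
  have hCB0 : 0 ≤ CB := by
    have h := hCB 0
    simp only [Matrix.mulVec_zero, norm_zero] at h
    -- 0 ≤ CB * 0 gives nothing; use instead v = single
    by_contra hneg
    push_neg at hneg
    have h1 := hCB (Pi.single ⟨0, hd⟩ 1)
    have h2 : (0:ℝ) ≤ ‖B.mulVec (Pi.single ⟨0, hd⟩ 1)‖ := norm_nonneg _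
    have h3 : CB * ‖(Pi.single ⟨0, hd⟩ 1 : Fin d → ℝ)‖ < 0 := by
      apply mul_neg_of_neg_of_pos hneg
      rw [norm_pos_iff]
      intro h
      have := congrFun h ⟨0, hd⟩
      simp at this
    linarith
  set sbar := max 0 (Real.log (1 / m)) with hsbardef
  set bigb := Finset.univ.sup' Finset.univ_nonempty (fun i => Real.exp (sbar * D i)) with hbigbdef
  have hb0 : (0:ℝ) ≤ bigb :=
    le_trans (Real.exp_pos (sbar * D ⟨0, hd⟩)).le
      (Finset.le_sup' (fun i => Real.exp (sbar * D i)) (Finset.mem_univ (⟨0, hd⟩ : Fin d)))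
  set R := CB * bigb with hRdef
  have hKbound : ∀ ξ : Fin d → ℝ, ‖P ξ‖ ≤ 1 → ‖ξ‖ ≤ R := by
    intro ξ hξ
    rcases eq_or_ne ξ 0 with rfl | hξne
    · simp only [norm_zero]
      exact mul_nonneg hCB0 hb0
    · set η := B⁻¹.mulVec ξ with hηdef
      have hη : B.mulVec η = ξ := my_mulVec_cancel' B hB ξ
      have hηne : η ≠ 0 := by
        intro h
        apply hξne
        rw [← hη, h, Matrix.mulVec_zero]
      -- find scaling parameter s with ∑ (exp(-(s*D i)) * η i)^2 = 1
      set ψ : ℝ → ℝ := fun s => ∑ i, (η i)^2 * Real.exp (-(2 * D i) * s) with hψdef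
      have hψcont : Continuous ψ := by
        refine continuous_finset_sum _ fun i _ => Continuous.mul continuous_const ?_
        exact Real.continuous_exp.comp (continuous_const.mul continuous_id)
      have htop : Filter.Tendsto ψ Filter.atTop (nhds 0) := by
        rw [hψdef]
        have h0 : (0:ℝ) = ∑ i : Fin d, (0:ℝ) := by simp
        rw [h0]
        refine tendsto_finset_sum _ fun i _ => ?_
        rw [show (0:ℝ) = (η i)^2 * 0 by ring]
        refine Filter.Tendsto.const_mul _ ?_
        refine Real.tendsto_exp_atBot.comp ?_
        have hneg : -(2 * D i) < 0 := by have := hDpos i; linarith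
        exact Filter.Tendsto.neg_mul_atTop hneg tendsto_const_nhds Filter.tendsto_id
      have hbot : Filter.Tendsto ψ Filter.atBot Filter.atTop := by
        obtain ⟨i₀, hi₀⟩ : ∃ i, η i ≠ 0 := by
          by_contra hcon
          push_neg at hcon
          exact hηne (funext fun i => hcon i)
        have hterm : Filter.Tendsto (fun s => (η i₀)^2 * Real.exp (-(2 * D i₀) * s))
            Filter.atBot Filter.atTop := by
          refine Filter.Tendsto.const_mul_atTop (by positivity) ?_
          refine Real.tendsto_exp_atTop.comp ?_
          have hpos : (0:ℝ) < 2 * D i₀ := by have := hDpos i₀; linarith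
          have h := Filter.Tendsto.const_mul_atTop hpos Filter.tendsto_neg_atBot_atTop
          refine h.congr fun s => ?_
          ring
        refine Filter.tendsto_atTop_mono (fun s => ?_) hterm
        exact Finset.single_le_sum (f := fun i => (η i)^2 * Real.exp (-(2 * D i) * s))
          (fun i _ => by positivity) (Finset.mem_univ i₀)
      obtain ⟨a, ha⟩ := Filter.eventually_atTop.mp
        (htop.eventually_lt_const (by norm_num : (0:ℝ) < 1))
      obtain ⟨b, hb⟩ := Filter.eventually_atBot.mp (hbot.eventually_ge_atTop 1)
      have hkey2 : ∃ s, ψ s = 1 := by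
        have hle : min a b ≤ max a b := le_trans (min_le_left _ _) (le_max_left _ _)
        have h1 : ψ (max a b) ≤ 1 := (ha _ (le_max_left _ _)).le
        have h2 : 1 ≤ ψ (min a b) := hb _ (min_le_right _ _)
        have := intermediate_value_Icc' hle hψcont.continuousOn
        have hmem : (1:ℝ) ∈ Set.Icc (ψ (max a b)) (ψ (min a b)) := ⟨h1, h2⟩
        obtain ⟨s, _, hs⟩ := this hmem
        exact ⟨s, hs⟩
      obtain ⟨s, hs⟩ := hkey2
      set w : Fin d → ℝ := fun i => Real.exp (-(s * D i)) * η i with hwdef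
      have hwSq : w ∈ Sq := by
        rw [hSqdef]
        simp only [Set.mem_setOf_eq]
        rw [← hs, hψdef]
        refine Finset.sum_congr rfl fun i _ => ?_
        rw [hwdef]
        have hsq : Real.exp (-(s * D i)) ^ 2 = Real.exp (-(2 * D i) * s) := by
          rw [sq, ← Real.exp_add]
          congr 1
          ring
        rw [mul_pow, hsq]
        ring
      have hξeq : ξ = B.mulVec (fun i => Real.exp (s * D i) * w i) := by
        have hveq : (fun i => Real.exp (s * D i) * w i) = η := by
          funext i
          rw [hwdef]
          simp only
          rw [← mul_assoc, ← Real.exp_add]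
          simp
        rw [hveq]
        exact hη.symm
      have happ : ‖P ξ‖ = Real.exp s * ‖P (B.mulVec w)‖ := by
        rw [hξeq, hkey s w, norm_mul, Complex.norm_real, Real.norm_eq_abs, abs_of_pos (Real.exp_pos s)]
      have hlow : Real.exp s * m ≤ ‖P ξ‖ := by
        rw [happ]
        exact mul_le_mul_of_nonneg_left (hw₀min w hwSq) (Real.exp_pos s).le
      have hexps : Real.exp s * m ≤ 1 := le_trans hlow hξ
      have hsle : ∀ i, Real.exp (s * D i) ≤ Real.exp (sbar * D i) := by
        intro i
        rw [Real.exp_le_exp]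
        rcases le_or_gt s 0 with hsneg | hspos
        · calc s * D i ≤ 0 := mul_nonpos_of_nonpos_of_nonneg hsneg (hDpos i).le
          _ ≤ sbar * D i := mul_nonneg (le_max_left _ _) (hDpos i).le
        · have h1 : Real.exp s ≤ 1 / m := by
            rw [le_div_iff₀ hm]
            exact hexps
          have h2 : s ≤ Real.log (1 / m) := by
            have := Real.log_le_log (Real.exp_pos s) h1
            rwa [Real.log_exp] at this
          have h3 : s ≤ sbar := le_trans h2 (le_max_right _ _)
          exact mul_le_mul_of_nonneg_right h3 (hDpos i).le
      rw [hξeq]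
      calc ‖B.mulVec (fun i => Real.exp (s * D i) * w i)‖
          ≤ CB * ‖(fun i => Real.exp (s * D i) * w i)‖ := hCB _
        _ ≤ CB * bigb := by
            refine mul_le_mul_of_nonneg_left ?_ hCB0
            rw [pi_norm_le_iff_of_nonneg hb0]
            intro i
            rw [Real.norm_eq_abs, abs_mul, abs_of_pos (Real.exp_pos _)]
            calc Real.exp (s * D i) * |w i| ≤ Real.exp (s * D i) * 1 := by
                  exact mul_le_mul_of_nonneg_left (hSqsub w hwSq i) (Real.exp_pos _).le
              _ = Real.exp (s * D i) := mul_one _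
              _ ≤ Real.exp (sbar * D i) := hsle i
              _ ≤ bigb := Finset.le_sup' (fun i => Real.exp (sbar * D i)) (Finset.mem_univ i)
  -- the sublevel set K
  set K : Set (Fin d → ℝ) := {ξ | ‖P ξ‖ ≤ 1} with hKdef
  have hKclosed : IsClosed K :=
    isClosed_le (continuous_norm.comp hPcont) continuous_const
  have hKcompact : IsCompact K :=
    Metric.isCompact_of_isClosed_isBounded hKclosed
      (isBounded_iff_forall_norm_le.mpr ⟨R, hKbound⟩)
  have hKfin : MeasureTheory.volume K ≠ ⊤ := hKcompact.measure_lt_top.ne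
  have hK0 : MeasureTheory.volume K ≠ 0 := by
    have hU : IsOpen {ξ : Fin d → ℝ | ‖P ξ‖ < 1} :=
      isOpen_lt (continuous_norm.comp hPcont) continuous_const
    have h0U : (0 : Fin d → ℝ) ∈ {ξ : Fin d → ℝ | ‖P ξ‖ < 1} := by
      simp [hP0]
    have hpos := hU.measure_pos MeasureTheory.volume ⟨0, h0U⟩
    have hsub : {ξ : Fin d → ℝ | ‖P ξ‖ < 1} ⊆ K := fun ξ hξ =>
      show ‖P ξ‖ ≤ 1 from le_of_lt hξ
    exact (lt_of_lt_of_le hpos (MeasureTheory.measure_mono hsub)).ne'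
  -- main inequality step
  have hle : ∀ G₁ G₂ : Matrix (Fin d) (Fin d) ℝ,
      (∀ t : ℝ, 0 < t → ∀ ξ : Fin d → ℝ,
        P ((NormedSpace.exp ((Real.log t) • G₁)).mulVec ξ) = (t : ℂ) * P ξ) →
      (∀ t : ℝ, 0 < t → ∀ ξ : Fin d → ℝ,
        P ((NormedSpace.exp ((Real.log t) • G₂)).mulVec ξ) = (t : ℂ) * P ξ) →
      G₁.trace ≤ G₂.trace := by
    intro G₁ G₂ hG₁ hG₂
    set A₁ := NormedSpace.exp ((1:ℝ) • G₁) with hA₁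
    set A₂ := NormedSpace.exp ((-1:ℝ) • G₂) with hA₂
    set G := A₁ * A₂ with hG
    have hGpres : ∀ ξ, P (G.mulVec ξ) = P ξ := by
      intro ξ
      have e1 := hG₁ (Real.exp 1) (Real.exp_pos 1) (A₂.mulVec ξ)
      rw [Real.log_exp] at e1
      have e2 := hG₂ (Real.exp (-1)) (Real.exp_pos (-1)) ξ
      rw [Real.log_exp] at e2
      rw [hG, ← Matrix.mulVec_mulVec, e1, e2, ← mul_assoc, ← Complex.ofReal_mul,
        ← Real.exp_add]
      norm_num
    have himg : (Matrix.toLin' G) '' K ⊆ K := by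
      rintro _ ⟨ξ, hξ, rfl⟩
      rw [hKdef]
      simp only [Set.mem_setOf_eq]
      rw [Matrix.toLin'_apply, hGpres]
      exact hξ
    have hmeas := MeasureTheory.Measure.addHaar_image_linearMap
      (MeasureTheory.volume : MeasureTheory.Measure (Fin d → ℝ)) (Matrix.toLin' G) K
    have hdetG : LinearMap.det (Matrix.toLin' G) = Real.exp (G₁.trace - G₂.trace) := by
      rw [LinearMap.det_toLin', hG, Matrix.det_mul, hA₁, hA₂, my_det_exp, my_det_exp,
        ← Real.exp_add]
      congr 1
      rw [Matrix.trace_smul, Matrix.trace_smul]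
      simp [sub_eq_add_neg]
    have hineq : ENNReal.ofReal |LinearMap.det (Matrix.toLin' G)| * MeasureTheory.volume K
        ≤ MeasureTheory.volume K := by
      rw [← hmeas]
      exact MeasureTheory.measure_mono himg
    have hone : ENNReal.ofReal |LinearMap.det (Matrix.toLin' G)| ≤ 1 := by
      by_contra hcon
      push_neg at hcon
      have h2 : ENNReal.ofReal |LinearMap.det (Matrix.toLin' G)| * MeasureTheory.volume K
          ≤ 1 * MeasureTheory.volume K := by rwa [one_mul]
      have h3 := (ENNReal.mul_le_mul_iff_left hK0 hKfin).mp h2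
      exact absurd h3 (not_le.mpr hcon)
    rw [hdetG, abs_of_pos (Real.exp_pos _), ENNReal.ofReal_le_one, Real.exp_le_one_iff] at hone
    linarith
  exact le_antisymm (hle F₁ F₂ hF₁ hF₂) (hle F₂ F₁ hF₂ hF₁)
end

section
/- Let P be a nondegenerate-homogeneous polynomial on a d-dimensional real vector space W. Then there exist a basis w₁,…,w_d of W and positive integers n₁,…,n_d such that, writing ξ = ξ₁w₁ + … + ξ_d w_d, P(ξ) = Σ_{β : Σⱼ βⱼ/nⱼ = 1} a_β ξ^β for some complex coefficients a_β, where the sum ranges over multi-indices β ∈ ℕ^d with Σⱼ βⱼ/nⱼ = 1. -/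
open MvPolynomial Matrix

lemma eval_real_cast_zero : ∀ {d : ℕ} (f : MvPolynomial (Fin d) ℂ),
    (∀ ξ : Fin d → ℝ, MvPolynomial.eval (fun i => (ξ i : ℂ)) f = 0) → f = 0 := by
  intro d
  induction d with
  | zero =>
    intro f h
    apply MvPolynomial.funext (q := 0)
    intro x
    rw [map_zero, show x = (fun i => ((0 : Fin 0 → ℝ) i : ℂ)) from funext fun i => i.elim0]
    exact h 0
  | succ n ih =>
    intro f h
    have key : ∀ s : Fin n → ℝ,
        Polynomial.map (eval fun i => ((s i : ℂ))) (finSuccEquiv ℂ n f) = 0 := by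
      intro s
      apply Polynomial.eq_zero_of_infinite_isRoot
      apply Set.infinite_of_injective_forall_mem (f := fun y : ℝ => (y : ℂ))
      · exact Complex.ofReal_injective
      · intro y
        have hx := h (Fin.cons y s)
        have hfun : (fun i => ((Fin.cons y s : Fin (n+1) → ℝ) i : ℂ))
            = Fin.cons (y : ℂ) (fun i => (s i : ℂ)) := by
          funext i; refine Fin.cases rfl (fun j => rfl) i
        rw [hfun, eval_eq_eval_mv_eval'] at hx
        exact hx
    have hco : finSuccEquiv ℂ n f = 0 := by
      ext k : 1
      rw [Polynomial.coeff_zero]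
      apply ih
      intro s
      have := congrArg (fun g => Polynomial.coeff g k) (key s)
      simpa using this
    have := congrArg (finSuccEquiv ℂ n).symm hco
    simpa using this

lemma exp_smul_conj_diag {d : ℕ} (B : Matrix (Fin d) (Fin d) ℝ) (D : Fin d → ℝ) (hB : IsUnit B)
    (t : ℝ) (ht : 0 < t) :
    NormedSpace.exp (Real.log t • (B * Matrix.diagonal D * B⁻¹))
      = B * Matrix.diagonal (fun i => t ^ (D i)) * B⁻¹ := by
  have hd : Matrix.diagonal (fun i => Real.log t * D i) = Real.log t • Matrix.diagonal D := by
    ext i j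
    by_cases h : i = j <;> simp [Matrix.diagonal_apply, h]
  have h1 : Real.log t • (B * Matrix.diagonal D * B⁻¹)
      = B * Matrix.diagonal (fun i => Real.log t * D i) * B⁻¹ := by
    rw [hd, ← smul_mul_assoc, ← mul_smul_comm]
  have h2 : NormedSpace.exp (fun i => Real.log t * D i) = fun i => t ^ (D i) := by
    rw [Pi.exp_def]
    funext i
    rw [← Real.exp_eq_exp_ℝ, Real.rpow_def_of_pos ht]
  rw [h1, Matrix.exp_conj B _ hB, Matrix.exp_diagonal, h2]

/-- Representation of a nondegenerate-homogeneous polynomial: there exist a basis and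
positive integer weights n such that P is a sum of monomials ξ^β with |β : n| = 1. -/
theorem nondegenerate_homogeneous_representation {d : ℕ}
    (p : MvPolynomial (Fin d) ℂ) (P : (Fin d → ℝ) → ℂ)
    (hP : ∀ ξ : Fin d → ℝ, P ξ = MvPolynomial.eval (fun i => (ξ i : ℂ)) p)
    (hnondeg : ∀ ξ : Fin d → ℝ, ξ ≠ 0 → P ξ ≠ 0)
    (E B : Matrix (Fin d) (Fin d) ℝ) (D : Fin d → ℝ)
    (hB : IsUnit B) (hdiag : E = B * Matrix.diagonal D * B⁻¹)
    (hhom : ∀ t : ℝ, 0 < t → ∀ ξ : Fin d → ℝ,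
      P ((NormedSpace.exp ((Real.log t) • E)).mulVec ξ) = (t : ℂ) * P ξ) :
    ∃ (w : Module.Basis (Fin d) ℝ (Fin d → ℝ)) (n : Fin d → ℕ)
      (S : Finset (Fin d → ℕ)) (a : (Fin d → ℕ) → ℂ),
      (∀ i, 0 < n i) ∧
      (∀ β ∈ S, (∑ j, (β j : ℚ) / (n j : ℚ)) = 1) ∧
      (∀ ξ : Fin d → ℝ,
        P (∑ i, ξ i • w i) = ∑ β ∈ S, a β * ∏ j, (ξ j : ℂ) ^ (β j)) := by
  classical
  have hBdet : IsUnit B.det := (Matrix.isUnit_iff_isUnit_det B).mp hB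
  have hBiB : B⁻¹ * B = 1 := Matrix.nonsing_inv_mul B hBdet
  have hBBi : B * B⁻¹ = 1 := Matrix.mul_nonsing_inv B hBdet
  -- the polynomial q(ξ) = p(Bξ)
  set q : MvPolynomial (Fin d) ℂ :=
    MvPolynomial.bind₁ (fun i => ∑ j, MvPolynomial.C ((B i j : ℝ) : ℂ) * MvPolynomial.X j) p
    with hq_def
  have hq : ∀ ξ : Fin d → ℝ,
      MvPolynomial.eval (fun i => (ξ i : ℂ)) q = P (B.mulVec ξ) := by
    intro ξ
    rw [hP, hq_def,
      show (MvPolynomial.eval (fun i => (ξ i : ℂ)))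
        = MvPolynomial.eval₂Hom (RingHom.id ℂ) (fun i => (ξ i : ℂ)) from rfl,
      MvPolynomial.eval₂Hom_bind₁]
    apply MvPolynomial.eval₂Hom_congr rfl _ rfl
    funext i
    simp [Matrix.mulVec, dotProduct]
  -- scaling identity for q
  have hscale : ∀ t : ℝ, 0 < t → ∀ ξ : Fin d → ℝ,
      MvPolynomial.eval (fun i => ((t ^ (D i) * ξ i : ℝ) : ℂ)) q
        = (t : ℂ) * MvPolynomial.eval (fun i => (ξ i : ℂ)) q := by
    intro t ht ξ
    rw [hq, hq]
    have hdv : (Matrix.diagonal fun i => t ^ (D i)).mulVec ξ = fun i => t ^ (D i) * ξ i := by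
      funext i
      rw [Matrix.mulVec_diagonal]
    have h1 : (NormedSpace.exp ((Real.log t) • E)).mulVec (B.mulVec ξ)
        = B.mulVec (fun i => t ^ (D i) * ξ i) := by
      rw [hdiag, exp_smul_conj_diag B D hB t ht, Matrix.mulVec_mulVec,
        Matrix.mul_assoc _ B⁻¹ B, hBiB, Matrix.mul_one, ← Matrix.mulVec_mulVec, hdv]
    rw [← h1, hhom t ht]
  -- weight of a monomial
  set wgt : (Fin d →₀ ℕ) → ℝ := fun β => ∑ i, (β i : ℝ) * D i with hwgt_def
  -- every monomial in the support of q has weight 1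
  have hwone : ∀ β ∈ q.support, wgt β = 1 := by
    intro β hβ
    have hcoeffs : ∀ t : ℝ, 0 < t →
        ((t ^ (wgt β) : ℝ) : ℂ) * MvPolynomial.coeff β q
          = (t : ℂ) * MvPolynomial.coeff β q := by
      intro t ht
      set r : MvPolynomial (Fin d) ℂ :=
        ∑ γ ∈ q.support,
          MvPolynomial.monomial γ (((t ^ (wgt γ) : ℝ) : ℂ) * MvPolynomial.coeff γ q) with hr_def
      have hzero : r - MvPolynomial.C (t : ℂ) * q = 0 := by
        apply eval_real_cast_zero
        intro ξ
        rw [map_sub, sub_eq_zero, _root_.map_mul, MvPolynomial.eval_C]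
        rw [← hscale t ht ξ]
        rw [MvPolynomial.eval_eq' (fun i => ((t ^ (D i) * ξ i : ℝ) : ℂ)) q]
        rw [hr_def, map_sum]
        apply Finset.sum_congr rfl
        intro γ hγ
        rw [MvPolynomial.eval_monomial]
        have hprod : ∏ i, ((t ^ (D i) * ξ i : ℝ) : ℂ) ^ (γ i)
            = ((t ^ (wgt γ) : ℝ) : ℂ) * ∏ i, ((ξ i : ℝ) : ℂ) ^ (γ i) := by
          have : ∀ i, ((t ^ (D i) * ξ i : ℝ) : ℂ) ^ (γ i)
              = ((t ^ ((γ i : ℝ) * D i) : ℝ) : ℂ) * ((ξ i : ℝ) : ℂ) ^ (γ i) := by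
            intro i
            have hre : (t ^ (D i)) ^ (γ i : ℕ) = t ^ ((γ i : ℝ) * D i) := by
              rw [← Real.rpow_natCast (t ^ (D i)) (γ i), ← Real.rpow_mul ht.le,
                mul_comm (D i)]
            rw [Complex.ofReal_mul, mul_pow, ← Complex.ofReal_pow, hre]
          rw [Finset.prod_congr rfl (fun i _ => this i), Finset.prod_mul_distrib]
          congr 1
          rw [← Complex.ofReal_prod]
          congr 1
          rw [hwgt_def, Real.rpow_sum_of_pos ht]
        rw [hprod, Finsupp.prod_pow]
        ring
      have hr_eq : r = MvPolynomial.C (t : ℂ) * q := by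
        have := hzero
        rwa [sub_eq_zero] at this
      have hco : MvPolynomial.coeff β r = ((t ^ (wgt β) : ℝ) : ℂ) * MvPolynomial.coeff β q := by
        rw [hr_def, MvPolynomial.coeff_sum]
        rw [Finset.sum_eq_single β]
        · rw [MvPolynomial.coeff_monomial, if_pos rfl]
        · intro γ _ hne
          rw [MvPolynomial.coeff_monomial, if_neg hne]
        · intro h
          exact absurd hβ h
      have hcl := congrArg (MvPolynomial.coeff β) hr_eq
      rw [hco, MvPolynomial.coeff_C_mul] at hcl
      exact hcl
    -- take t = e
    have he := hcoeffs (Real.exp 1) (Real.exp_pos 1)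
    have hc : MvPolynomial.coeff β q ≠ 0 := MvPolynomial.mem_support_iff.mp hβ
    have : ((Real.exp 1 ^ (wgt β) : ℝ) : ℂ) = (Real.exp 1 : ℂ) :=
      mul_right_cancel₀ hc he
    have hr : Real.exp 1 ^ (wgt β) = Real.exp 1 := by exact_mod_cast this
    rw [Real.exp_one_rpow, Real.exp_eq_exp] at hr
    exact hr
  -- positive integer reciprocal weights
  have hni : ∀ i : Fin d, ∃ m : ℕ, 0 < m ∧ (m : ℝ) * D i = 1 := by
    intro i
    set eI : Fin d → ℝ := Pi.single i 1 with he_def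
    have hei : eI ≠ 0 := by
      intro h0
      have := congrFun h0 i
      simp [he_def] at this
    have hBe : B.mulVec eI ≠ 0 := by
      intro h0
      have h1 : B⁻¹.mulVec (B.mulVec eI) = eI := by
        rw [Matrix.mulVec_mulVec, hBiB, Matrix.one_mulVec]
      rw [h0, Matrix.mulVec_zero] at h1
      exact hei h1.symm
    have hPne := hnondeg _ hBe
    rw [← hq eI, MvPolynomial.eval_eq' _ q] at hPne
    obtain ⟨β, hβ, hβne⟩ := Finset.exists_ne_zero_of_sum_ne_zero hPne
    have hsupp : ∀ j, j ≠ i → β j = 0 := by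
      intro j hj
      by_contra hne
      apply hβne
      apply mul_eq_zero_of_right
      apply Finset.prod_eq_zero (Finset.mem_univ j)
      have h0 : ((eI j : ℝ) : ℂ) = 0 := by
        rw [he_def, Pi.single_eq_of_ne hj, Complex.ofReal_zero]
      rw [h0, zero_pow hne]
    have hw : ∑ j : Fin d, ((β j : ℝ)) * D j = 1 := hwone β hβ
    have hsum : ∑ j, ((β j : ℝ) * D j) = (β i : ℝ) * D i := by
      rw [Finset.sum_eq_single i]
      · intro j _ hj
        rw [hsupp j hj]
        simp
      · intro h
        exact absurd (Finset.mem_univ i) h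
    rw [hsum] at hw
    refine ⟨β i, ?_, hw⟩
    rcases Nat.eq_zero_or_pos (β i) with h0 | hpos
    · rw [h0] at hw
      norm_num at hw
    · exact hpos
  choose n hnpos hnD using hni
  have hDj : ∀ j, D j = ((n j : ℝ))⁻¹ := by
    intro j
    have hj := hnD j
    have hne : ((n j : ℝ)) ≠ 0 := Nat.cast_ne_zero.mpr (hnpos j).ne'
    field_simp
    linarith
  -- the basis given by the columns of B
  have hcomp1 : (Matrix.mulVecLin B).comp (Matrix.mulVecLin B⁻¹) = LinearMap.id := by
    rw [← Matrix.mulVecLin_mul, hBBi, Matrix.mulVecLin_one]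
  have hcomp2 : (Matrix.mulVecLin B⁻¹).comp (Matrix.mulVecLin B) = LinearMap.id := by
    rw [← Matrix.mulVecLin_mul, hBiB, Matrix.mulVecLin_one]
  set e : (Fin d → ℝ) ≃ₗ[ℝ] (Fin d → ℝ) :=
    LinearEquiv.ofLinear (Matrix.mulVecLin B) (Matrix.mulVecLin B⁻¹) hcomp1 hcomp2 with he
  refine ⟨(Pi.basisFun ℝ (Fin d)).map e, n,
    q.support.image (fun γ : Fin d →₀ ℕ => (γ : Fin d → ℕ)),
    fun b => MvPolynomial.coeff (Finsupp.equivFunOnFinite.symm b) q, hnpos, ?_, ?_⟩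
  · intro b hb
    obtain ⟨β, hβ, rfl⟩ := Finset.mem_image.mp hb
    have hw : ∑ j : Fin d, ((β j : ℝ)) * D j = 1 := hwone β hβ
    have key : ∑ j, ((β j : ℝ) / (n j : ℝ)) = 1 := by
      rw [← hw]
      apply Finset.sum_congr rfl
      intro j _
      rw [hDj j, div_eq_mul_inv]
    have hcast : ((∑ j, ((β j : ℚ) / (n j : ℚ)) : ℚ) : ℝ)
        = ∑ j, ((β j : ℝ) / (n j : ℝ)) := by
      push_cast
      rfl
    exact_mod_cast hcast.trans key
  · intro ξ
    have hbasis : ∀ i, ((Pi.basisFun ℝ (Fin d)).map e) i = e (Pi.single i (1:ℝ) : Fin d → ℝ) := by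
      intro i
      rw [Module.Basis.map_apply, Pi.basisFun_apply]
    have hid : (∑ i, ξ i • (Pi.single i (1:ℝ) : Fin d → ℝ)) = ξ := by
      funext j
      rw [Finset.sum_apply]
      simp [Pi.single_apply]
    have hsum : (∑ i, ξ i • ((Pi.basisFun ℝ (Fin d)).map e) i) = B.mulVec ξ := by
      calc (∑ i, ξ i • ((Pi.basisFun ℝ (Fin d)).map e) i)
          = ∑ i, e (ξ i • (Pi.single i (1:ℝ) : Fin d → ℝ)) := by
            apply Finset.sum_congr rfl
            intro i _
            rw [hbasis i, _root_.map_smul]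
        _ = e (∑ i, ξ i • (Pi.single i (1:ℝ) : Fin d → ℝ)) := (map_sum e _ _).symm
        _ = e ξ := by rw [hid]
        _ = B.mulVec ξ := by rw [he, LinearEquiv.ofLinear_apply, Matrix.mulVecLin_apply]
    rw [hsum, ← hq, MvPolynomial.eval_eq' _ q]
    rw [Finset.sum_image (fun β _ γ _ h => DFunLike.coe_injective h)]
    apply Finset.sum_congr rfl
    intro β hβ
    simp only [Finsupp.equivFunOnFinite_symm_coe]
end

section
/- Let P be a positive-homogeneous polynomial on a d-dimensional real vector space W, expressed with respect to a diagonalizing basis as P(ξ) = Σ_{|β:n|=1} a_β ξ^β where n = (n₁,…,n_d) ∈ ℕ₊^d. Then each nₖ is even, i.e., n = 2m for some m ∈ ℕ₊^d, and moreover Re(a_{nₖeₖ}) > 0 for each k = 1,…,d. -/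
/-- If a polynomial P(ξ) = Σ_{|β:n|=1} a_β ξ^β is positive-definite (Re P ≥ 0 vanishing only
at 0), then each weight nₖ is even and the axis coefficients have positive real part. -/
theorem positive_homogeneous_even_weights {d : ℕ}
    (n : Fin d → ℕ) (hn : ∀ i, 0 < n i)
    (S : Finset (Fin d → ℕ)) (a : (Fin d → ℕ) → ℂ)
    (hS : ∀ β ∈ S, (∑ j, (β j : ℚ) / (n j : ℚ)) = 1)
    (haS : ∀ β ∉ S, a β = 0)
    (P : (Fin d → ℝ) → ℂ)
    (hP : ∀ ξ : Fin d → ℝ, P ξ = ∑ β ∈ S, a β * ∏ j, (ξ j : ℂ) ^ (β j))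
    (hpos : ∀ ξ : Fin d → ℝ, 0 ≤ (P ξ).re)
    (hdef : ∀ ξ : Fin d → ℝ, (P ξ).re = 0 → ξ = 0) :
    (∀ k : Fin d, Even (n k)) ∧
    (∀ k : Fin d, 0 < (a (fun j => if j = k then n k else 0)).re) := by
  have key : ∀ (k : Fin d) (t : ℝ),
      P (fun j => if j = k then t else 0)
        = a (fun j => if j = k then n k else 0) * (t : ℂ) ^ (n k) := by
    intro k t
    set β0 : Fin d → ℕ := fun j => if j = k then n k else 0 with hβ0
    rw [hP]
    rw [Finset.sum_eq_single β0]
    · congr 1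
      rw [Fintype.prod_eq_single k]
      · simp [β0]
      · intro j hj
        simp [β0, hj]
    · intro β hβ hne
      have hj : ∃ j, j ≠ k ∧ β j ≠ 0 := by
        by_contra h
        push_neg at h
        apply hne
        have hsum := hS β hβ
        rw [Fintype.sum_eq_single k (fun j hj => by simp [h j hj])] at hsum
        have hnk : (n k : ℚ) ≠ 0 := by exact_mod_cast (hn k).ne'
        rw [div_eq_one_iff_eq hnk] at hsum
        have hbk : β k = n k := by exact_mod_cast hsum
        funext j
        by_cases hjk : j = k
        · subst hjk; simp [β0, hbk]
        · simp [β0, hjk, h j hjk]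
      obtain ⟨j, hjk, hbj⟩ := hj
      rw [Finset.prod_eq_zero (Finset.mem_univ j)]
      · ring
      · simp [hjk, hbj]
    · intro h
      rw [haS β0 h]; ring
  have hre : ∀ (k : Fin d) (t : ℝ),
      (P (fun j => if j = k then t else 0)).re
        = (a (fun j => if j = k then n k else 0)).re * t ^ (n k) := by
    intro k t
    rw [key k t, ← Complex.ofReal_pow]
    simp [Complex.mul_re, ← Complex.ofReal_pow]
  have hpos' : ∀ k : Fin d, 0 < (a (fun j => if j = k then n k else 0)).re := by
    intro k
    have h1 := hpos (fun j => if j = k then (1:ℝ) else 0)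
    rw [hre k 1] at h1
    simp only [one_pow, mul_one] at h1
    rcases lt_or_eq_of_le h1 with h | h
    · exact h
    · exfalso
      have h0 : (P (fun j => if j = k then (1:ℝ) else 0)).re = 0 := by
        rw [hre k 1]; simp [← h]
      have hz := hdef _ h0
      have := congrFun hz k
      simp at this
  refine ⟨?_, hpos'⟩
  intro k
  rcases Nat.even_or_odd (n k) with h | h
  · exact h
  · exfalso
    have hneg := hpos (fun j => if j = k then (-1:ℝ) else 0)
    rw [hre k (-1), h.neg_one_pow] at hneg
    have := hpos' k
    nlinarith
end

section
/- Let R : ℝ^d → ℝ be continuous, positive-definite, and homogeneous with respect to {t^E} for a diagonalizable E with all eigenvalues in (0,1). Then the Legendre–Fenchel transform R^# grows superlinearly: for any norm |·| on ℝ^d, |x|/R^#(x) → 0 as |x| → ∞. -/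
open Matrix Filter

/-- The Legendre–Fenchel transform of a continuous positive-definite function homogeneous
with respect to {t^E}, E diagonalizable with eigenvalues in (0,1), grows superlinearly. -/
theorem legendre_fenchel_superlinear {d : ℕ}
    (R : (Fin d → ℝ) → ℝ) (hcont : Continuous R)
    (hnonneg : ∀ ξ, 0 ≤ R ξ) (hdef : ∀ ξ : Fin d → ℝ, R ξ = 0 ↔ ξ = 0)
    (E B : Matrix (Fin d) (Fin d) ℝ) (D : Fin d → ℝ)
    (hB : IsUnit B) (hD : ∀ i, D i ∈ Set.Ioo (0:ℝ) 1)
    (hdiag : E = B * Matrix.diagonal D * B⁻¹)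
    (hhom : ∀ t : ℝ, 0 < t → ∀ ξ : Fin d → ℝ,
      R ((NormedSpace.exp ((Real.log t) • E)).mulVec ξ) = t * R ξ)
    (Rs : (Fin d → ℝ) → ℝ)
    (hRs : ∀ x : Fin d → ℝ, IsLUB {y : ℝ | ∃ ξ : Fin d → ℝ, y = ξ ⬝ᵥ x - R ξ} (Rs x)) :
    Tendsto (fun x : Fin d → ℝ => ‖x‖ / Rs x) (Bornology.cobounded (Fin d → ℝ)) (nhds 0) := by
  have hR0 : R 0 = 0 := (hdef 0).2 rfl
  have hRs0 : ∀ x, 0 ≤ Rs x := by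
    intro x
    have h0mem : (0:ℝ) ∈ {y : ℝ | ∃ ξ : Fin d → ℝ, y = ξ ⬝ᵥ x - R ξ} :=
      ⟨0, by simp [hR0]⟩
    simpa using (hRs x).1 h0mem
  rw [NormedAddCommGroup.tendsto_nhds_zero]
  intro ε hε
  set M : ℝ := 4 / ε with hM
  have hMpos : 0 < M := by positivity
  obtain ⟨ξ0, -, hC⟩ := (isCompact_closedBall (0 : Fin d → ℝ) M).exists_isMaxOn
    ⟨0, by simp [hMpos.le]⟩ hcont.continuousOn
  set C : ℝ := R ξ0 with hCdef
  have hC0 : 0 ≤ C := hnonneg ξ0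
  -- key estimate
  have key : ∀ x : Fin d → ℝ, M * ‖x‖ - C ≤ Rs x := by
    intro x
    by_cases hx : x = 0
    · have := hRs0 x
      simp only [hx, norm_zero, mul_zero, zero_sub]
      linarith [hRs0 (0 : Fin d → ℝ), hx ▸ hRs0 x]
    · obtain ⟨i0, hi0⟩ := Function.ne_iff.1 hx
      obtain ⟨i, -, hi⟩ := Finset.exists_mem_eq_sup Finset.univ
        ⟨i0, Finset.mem_univ _⟩ (fun j => ‖x j‖₊)
      have hnorm : ‖x‖ = |x i| := by
        rw [Pi.norm_def, hi]
        simp [Real.norm_eq_abs]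
      have hxpos : 0 < |x i| := by
        rw [← hnorm]
        exact norm_pos_iff.2 hx
      have hxi : x i ≠ 0 := abs_pos.1 hxpos
      set c : ℝ := M * x i / |x i| with hc
      have hcabs : |c| = M := by
        rw [hc, abs_div, abs_mul, abs_abs, abs_of_pos hMpos,
          mul_div_assoc, div_self hxpos.ne']
        ring
      set ξ : Fin d → ℝ := c • (Pi.single i (1:ℝ) : Fin d → ℝ) with hξ
      have hdot : ξ ⬝ᵥ x = M * ‖x‖ := by
        have : ξ ⬝ᵥ x = c * x i := by
          simp [hξ, dotProduct, Pi.single_apply, mul_ite, Finset.sum_ite_eq']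
        rw [this, hc, hnorm]
        have habs : x i * x i = |x i| * |x i| := (abs_mul_abs_self _).symm
        field_simp
        nlinarith [habs]
      have hξball : ξ ∈ Metric.closedBall (0 : Fin d → ℝ) M := by
        rw [Metric.mem_closedBall, dist_zero_right]
        refine (pi_norm_le_iff_of_nonneg hMpos.le).2 fun j => ?_
        simp only [hξ, Pi.smul_apply, Pi.single_apply, smul_eq_mul]
        rcases eq_or_ne j i with h | h
        · simp [h, Real.norm_eq_abs, hcabs.le]
        · simp [h, hMpos.le]
      have hmem := (hRs x).1 ⟨ξ, rfl⟩
      have hRξ : R ξ ≤ C := hC hξball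
      linarith [hdot ▸ hmem]
  have hev : ∀ᶠ x : Fin d → ℝ in Bornology.cobounded _,
      max 1 (2 * C / M) ≤ ‖x‖ :=
    tendsto_norm_cobounded_atTop.eventually_ge_atTop _
  filter_upwards [hev] with x hx
  have h1 : (1:ℝ) ≤ ‖x‖ := le_trans (le_max_left _ _) hx
  have h2 : 2 * C / M ≤ ‖x‖ := le_trans (le_max_right _ _) hx
  have hCle : C ≤ M * ‖x‖ / 2 := by
    rw [div_le_iff₀ hMpos] at h2
    linarith
  have hRsx : M * ‖x‖ / 2 ≤ Rs x := by linarith [key x]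
  have hRspos : 0 < Rs x := lt_of_lt_of_le (by nlinarith) hRsx
  have hxpos : (0:ℝ) < ‖x‖ := by linarith
  have hle : ‖x‖ / Rs x ≤ ε / 2 := by
    calc ‖x‖ / Rs x ≤ ‖x‖ / (M * ‖x‖ / 2) := by
          exact div_le_div_of_nonneg_left hxpos.le (by nlinarith) hRsx
      _ = 2 / M := by field_simp
      _ = ε / 2 := by rw [hM]; field_simp; ring
  have hnn : 0 ≤ ‖x‖ / Rs x := div_nonneg hxpos.le hRspos.le
  rw [Real.norm_eq_abs, abs_of_nonneg hnn]
  linarith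
end

section
/- Let m = (m₁,…,m_d) ∈ ℕ₊^d and define ω = (2m₁/(2m₁−1), …, 2m_d/(2m_d−1)) and the anisotropic homogeneous norm |x|^ω = Σₖ |xₖ|^{ωₖ}. Let R^# be the Legendre–Fenchel transform of a positive-definite continuous R on (ℝ^d)* homogeneous with respect to {t^{E*}} where E eₖ = eₖ/(2mₖ). Then R^# and |·|^ω are comparable: there exists C > 0 with C⁻¹|x|^ω ≤ R^#(x) ≤ C|x|^ω for all x ∈ ℝ^d. -/
open Matrix

/-- Upper Young-type bound: u*a - b*u^(2n) ≤ b^(-1/(2n-1)) * a^(2n/(2n-1)). -/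
lemma lf_aux_upper (n : ℕ) (hn : 0 < n) (b : ℝ) (hb : 0 < b) (u a : ℝ) (hu : 0 ≤ u)
    (ha : 0 ≤ a) :
    u * a - b * u ^ (2 * n) ≤
      b ^ (-(1 / (2 * (n : ℝ) - 1))) * a ^ ((2 * (n : ℝ)) / (2 * (n : ℝ) - 1)) := by
  have hn1 : (1 : ℝ) ≤ (n : ℝ) := by exact_mod_cast hn
  have hs : (0 : ℝ) < 2 * (n : ℝ) - 1 := by linarith
  set s : ℝ := 2 * (n : ℝ) - 1 with hsdef
  have hrhs : 0 ≤ b ^ (-(1 / s)) * a ^ ((2 * (n : ℝ)) / s) := by positivity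
  rcases le_or_gt (u * a) (b * u ^ (2 * n)) with h | h
  · linarith
  · -- u*a > b*u^(2n) ≥ 0, so u > 0, a > 0
    have hupow : 0 ≤ b * u ^ (2 * n) := by positivity
    have hua : 0 < u * a := lt_of_le_of_lt hupow h
    have hu' : 0 < u := by
      rcases hu.lt_or_eq with h' | h'
      · exact h'
      · exfalso; rw [← h'] at hua; simp at hua
    have ha' : 0 < a := by by_contra hc; push_neg at hc; nlinarith
    -- from h : b * u^(2n) < u * a, get u^(2n-1) < a / b
    have h2 : u ^ (2 * n - 1) < a / b := by
      rw [lt_div_iff₀ hb]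
      have : u * (u ^ (2 * n - 1) * b) < u * a := by
        have : u ^ (2 * n) = u * u ^ (2 * n - 1) := by
          rw [← pow_succ']
          congr 1
          omega
        nlinarith [this]
      have := (mul_lt_mul_iff_right₀ hu').mp this
      linarith
    have hcast : ((2 * n - 1 : ℕ) : ℝ) = s := by
      have : 1 ≤ 2 * n := by omega
      push_cast [Nat.cast_sub this]
      ring
    have h3 : u < (a / b) ^ (1 / s) := by
      have := Real.rpow_lt_rpow (by positivity) h2 (by positivity : (0:ℝ) < 1 / s)
      rwa [← Real.rpow_natCast u (2 * n - 1), ← Real.rpow_mul hu, hcast,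
        mul_one_div, div_self hs.ne', Real.rpow_one] at this
    have h4 : u * a < (a / b) ^ (1 / s) * a := by
      exact mul_lt_mul_of_pos_right h3 ha'
    have h5 : (a / b) ^ (1 / s) * a = b ^ (-(1 / s)) * a ^ ((2 * (n : ℝ)) / s) := by
      have he : 2 * (n : ℝ) / s = 1 / s + 1 := by rw [div_add_one hs.ne', hsdef]; ring
      have h6 : a ^ (1 / s) * a = a ^ (2 * (n : ℝ) / s) := by
        rw [he, Real.rpow_add ha', Real.rpow_one]
      rw [Real.div_rpow ha hb.le, Real.rpow_neg hb.le, ← h6]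
      ring
    linarith

/-- Lower bound: there is κ>0 and for each a ≥ 0 a point u ≥ 0 with
u*a - b*u^(2n) ≥ κ * a^(2n/(2n-1)). -/
lemma lf_aux_lower (n : ℕ) (hn : 0 < n) (b : ℝ) (hb : 0 < b) :
    ∃ κ : ℝ, 0 < κ ∧ ∀ a : ℝ, 0 ≤ a → ∃ u : ℝ, 0 ≤ u ∧
      κ * a ^ ((2 * (n : ℝ)) / (2 * (n : ℝ) - 1)) ≤ u * a - b * u ^ (2 * n) := by
  have hn1 : (1 : ℝ) ≤ (n : ℝ) := by exact_mod_cast hn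
  have hs : (0 : ℝ) < 2 * (n : ℝ) - 1 := by linarith
  set s : ℝ := 2 * (n : ℝ) - 1 with hsdef
  set A : ℝ := 2 * (n : ℝ) * b with hAdef
  have hA : 0 < A := by positivity
  have hfrac : (0 : ℝ) < 1 - 1 / (2 * (n : ℝ)) := by
    have : 1 / (2 * (n : ℝ)) ≤ 1 / 2 := by
      apply one_div_le_one_div_of_le <;> linarith
    linarith
  refine ⟨A ^ (-(1 / s)) * (1 - 1 / (2 * (n : ℝ))), by positivity, fun a ha => ?_⟩
  rcases ha.lt_or_eq with ha' | ha'
  · -- a > 0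
    refine ⟨(a / A) ^ (1 / s), by positivity, ?_⟩
    have hq : 2 * (n : ℝ) / s = 1 / s + 1 := by rw [div_add_one hs.ne', hsdef]; ring
    have hua : (a / A) ^ (1 / s) * a = A ^ (-(1 / s)) * a ^ (2 * (n : ℝ) / s) := by
      have h6 : a ^ (1 / s) * a = a ^ (2 * (n : ℝ) / s) := by
        rw [hq, Real.rpow_add ha', Real.rpow_one]
      rw [Real.div_rpow ha hA.le, Real.rpow_neg hA.le, ← h6]
      ring
    have hcast : ((2 * n : ℕ) : ℝ) = 2 * (n : ℝ) := by push_cast; ring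
    have hu2n : ((a / A) ^ (1 / s)) ^ (2 * n) =
        a ^ (2 * (n : ℝ) / s) * A ^ (-(2 * (n : ℝ) / s)) := by
      rw [← Real.rpow_natCast ((a / A) ^ (1 / s)) (2 * n), ← Real.rpow_mul (by positivity),
        hcast, one_div, inv_mul_eq_div, Real.div_rpow ha hA.le, Real.rpow_neg hA.le,
        div_eq_mul_inv]
    have hAq : A ^ (-(2 * (n : ℝ) / s)) = A ^ (-(1 / s)) * A⁻¹ := by
      have : -(2 * (n : ℝ) / s) = -(1 / s) + (-1 : ℝ) := by rw [hq]; ring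
      rw [this, Real.rpow_add hA, Real.rpow_neg_one]
    have hbA : b * A⁻¹ = 1 / (2 * (n : ℝ)) := by
      rw [hAdef]
      field_simp
    have key : A ^ (-(1 / s)) * (1 - 1 / (2 * (n : ℝ))) * a ^ (2 * (n : ℝ) / s) =
        (a / A) ^ (1 / s) * a - b * ((a / A) ^ (1 / s)) ^ (2 * n) := by
      rw [hua, hu2n, hAq, ← hbA]
      ring
    exact le_of_eq key
  · -- a = 0
    refine ⟨0, le_refl 0, ?_⟩
    rw [← ha', Real.zero_rpow (by positivity : (2 * (n : ℝ)) / (2 * (n : ℝ) - 1) ≠ 0)]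
    simp [zero_pow (by omega : 2 * n ≠ 0)]

/-- Comparability of a positive-definite continuous anisotropically homogeneous function
with the polynomial quasinorm Q(ξ) = Σ |ξ k|^(2 m k). -/
lemma lf_aux_compare {d : ℕ} (hd : 0 < d) (m : Fin d → ℕ) (hm : ∀ k, 0 < m k)
    (R : (Fin d → ℝ) → ℝ) (hcont : Continuous R) (hnonneg : ∀ ξ, 0 ≤ R ξ)
    (hdef : ∀ ξ : Fin d → ℝ, R ξ = 0 ↔ ξ = 0)
    (hhom : ∀ t : ℝ, 0 < t → ∀ ξ : Fin d → ℝ,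
      R (fun k => t ^ (1 / (2 * (m k : ℝ))) * ξ k) = t * R ξ) :
    ∃ c C : ℝ, 0 < c ∧ 0 < C ∧ ∀ ξ : Fin d → ℝ,
      c * (∑ k, |ξ k| ^ (2 * m k)) ≤ R ξ ∧ R ξ ≤ C * (∑ k, |ξ k| ^ (2 * m k)) := by
  classical
  set Q : (Fin d → ℝ) → ℝ := fun ξ => ∑ k, |ξ k| ^ (2 * m k) with hQdef
  have hQcont : Continuous Q :=
    continuous_finset_sum _ fun k _ => ((continuous_apply k).abs.pow _)
  have hQnonneg : ∀ ξ, 0 ≤ Q ξ := fun ξ =>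
    Finset.sum_nonneg fun k _ => pow_nonneg (abs_nonneg _) _
  have hQzero : ∀ ξ : Fin d → ℝ, Q ξ = 0 ↔ ξ = 0 := by
    intro ξ
    constructor
    · intro h
      funext k
      have hterm := (Finset.sum_eq_zero_iff_of_nonneg
        (fun k _ => pow_nonneg (abs_nonneg (ξ k)) (2 * m k))).mp h k (Finset.mem_univ k)
      have : |ξ k| = 0 := by
        have h2m : 2 * m k ≠ 0 := by have := hm k; omega
        exact pow_eq_zero_iff h2m |>.mp hterm
      simpa using this
    · intro h
      subst h
      simp [hQdef, zero_pow, fun k => (by have := hm k; omega : 2 * m k ≠ 0)]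
      exact Finset.sum_eq_zero fun k _ => zero_pow (by have := hm k; omega)
  set S : Set (Fin d → ℝ) := Q ⁻¹' {1} with hSdef
  have hSclosed : IsClosed S := isClosed_singleton.preimage hQcont
  have hSbdd : S ⊆ Metric.closedBall 0 1 := by
    intro ξ hξ
    have hQ1 : Q ξ = 1 := hξ
    rw [Metric.mem_closedBall, dist_zero_right]
    rw [pi_norm_le_iff_of_nonneg zero_le_one]
    intro k
    have h1 : |ξ k| ^ (2 * m k) ≤ 1 := by
      have h := Finset.single_le_sum
        (fun k _ => pow_nonneg (abs_nonneg (ξ k)) (2 * m k)) (Finset.mem_univ k)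
      exact le_trans h (le_of_eq hQ1)
    have h2m : 2 * m k ≠ 0 := by have := hm k; omega
    calc ‖ξ k‖ = |ξ k| := rfl
      _ ≤ 1 := by
          by_contra hc
          push_neg at hc
          have := one_lt_pow₀ hc h2m
          linarith
  have hScompact : IsCompact S :=
    Metric.isCompact_of_isClosed_isBounded hSclosed
      (Metric.isBounded_closedBall.subset hSbdd)
  have hSne : S.Nonempty := by
    refine ⟨Pi.single ⟨0, hd⟩ 1, ?_⟩
    show (∑ k, |(Pi.single (⟨0, hd⟩ : Fin d) (1:ℝ) : Fin d → ℝ) k| ^ (2 * m k)) = 1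
    rw [Finset.sum_eq_single (⟨0, hd⟩ : Fin d)]
    · simp
    · intro k _ hk
      rw [Pi.single_eq_of_ne hk]
      simp [zero_pow, (by have := hm k; omega : 2 * m k ≠ 0)]
      exact (hm k).ne'
    · simp
  obtain ⟨ξ₁, hξ₁S, hmin⟩ := hScompact.exists_isMinOn hSne hcont.continuousOn
  obtain ⟨ξ₂, hξ₂S, hmax⟩ := hScompact.exists_isMaxOn hSne hcont.continuousOn
  have hc : 0 < R ξ₁ := by
    rcases (hnonneg ξ₁).lt_or_eq with h | h
    · exact h
    · exfalso
      have := (hdef ξ₁).mp h.symm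
      have hQ1 : Q ξ₁ = 1 := hξ₁S
      rw [this, (hQzero 0).mpr rfl] at hQ1
      norm_num at hQ1
  have hC : 0 < R ξ₂ := lt_of_lt_of_le hc (hmin hξ₂S)
  refine ⟨R ξ₁, R ξ₂, hc, hC, fun ξ => ?_⟩
  by_cases hξ0 : ξ = 0
  · subst hξ0
    rw [(hdef 0).mpr rfl]
    have h0 : (∑ k : Fin d, |(0 : Fin d → ℝ) k| ^ (2 * m k)) = 0 := by
      simp [zero_pow, fun k : Fin d => (by have := hm k; omega : 2 * m k ≠ 0)]
      exact Finset.sum_eq_zero fun k _ => zero_pow (by have := hm k; omega)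
    rw [h0]
    simp
  · have ht : 0 < Q ξ := by
      rcases (hQnonneg ξ).lt_or_eq with h | h
      · exact h
      · exact absurd ((hQzero ξ).mp h.symm) hξ0
    set t : ℝ := Q ξ with htdef
    set η : Fin d → ℝ := fun k => t ^ (-(1 / (2 * (m k : ℝ)))) * ξ k with hηdef
    have hηξ : (fun k => t ^ (1 / (2 * (m k : ℝ))) * η k) = ξ := by
      funext k
      rw [hηdef]
      rw [← mul_assoc, ← Real.rpow_add ht]
      simp
    have hpowt : ∀ k : Fin d, (t ^ (-(1 / (2 * (m k : ℝ))))) ^ (2 * m k) = t⁻¹ := by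
      intro k
      have h2m : (0:ℝ) < 2 * (m k : ℝ) := by
        have := hm k; positivity
      rw [← Real.rpow_natCast (t ^ (-(1 / (2 * (m k : ℝ))))) (2 * m k),
        ← Real.rpow_mul ht.le]
      have : -(1 / (2 * (m k : ℝ))) * ((2 * m k : ℕ) : ℝ) = -1 := by
        push_cast
        field_simp
        rw [div_self (by exact_mod_cast (hm k).ne' : (m k : ℝ) ≠ 0)]
      rw [this, Real.rpow_neg_one]
    have hQη : Q η = 1 := by
      rw [hQdef]
      have : ∀ k : Fin d, |η k| ^ (2 * m k) = t⁻¹ * |ξ k| ^ (2 * m k) := by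
        intro k
        rw [hηdef]
        rw [abs_mul, mul_pow, abs_of_pos (Real.rpow_pos_of_pos ht _), hpowt k]
      simp only [this]
      rw [← Finset.mul_sum]
      exact inv_mul_cancel₀ ht.ne'
    have hRξ : R ξ = t * R η := by
      rw [← hhom t ht η, hηξ]
    have hmem : η ∈ S := hQη
    constructor
    · rw [hRξ]
      show R ξ₁ * t ≤ t * R η
      calc R ξ₁ * t ≤ R η * t := mul_le_mul_of_nonneg_right (hmin hmem) ht.le
        _ = t * R η := mul_comm _ _
    · rw [hRξ]
      show t * R η ≤ R ξ₂ * t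
      calc t * R η = R η * t := mul_comm _ _
        _ ≤ R ξ₂ * t := mul_le_mul_of_nonneg_right (hmax hmem) ht.le


/-- The Legendre–Fenchel transform R^# of a positive-definite continuous R, homogeneous with
respect to the diagonal group (t^E ξ)ₖ = t^{1/(2mₖ)} ξₖ, is comparable to the anisotropic
homogeneous norm |x|^ω = Σₖ |xₖ|^{2mₖ/(2mₖ−1)}. -/
theorem legendre_fenchel_comparable_homogeneous_norm {d : ℕ}
    (m : Fin d → ℕ) (hm : ∀ k, 0 < m k)
    (R : (Fin d → ℝ) → ℝ) (hcont : Continuous R)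
    (hnonneg : ∀ ξ, 0 ≤ R ξ) (hdef : ∀ ξ : Fin d → ℝ, R ξ = 0 ↔ ξ = 0)
    (hhom : ∀ t : ℝ, 0 < t → ∀ ξ : Fin d → ℝ,
      R (fun k => t ^ (1 / (2 * (m k : ℝ))) * ξ k) = t * R ξ)
    (Rs : (Fin d → ℝ) → ℝ)
    (hRs : ∀ x : Fin d → ℝ, IsLUB {y : ℝ | ∃ ξ : Fin d → ℝ, y = ξ ⬝ᵥ x - R ξ} (Rs x)) :
    ∃ C : ℝ, 0 < C ∧ ∀ x : Fin d → ℝ,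
      C⁻¹ * (∑ k, |x k| ^ ((2 * (m k : ℝ)) / (2 * (m k : ℝ) - 1))) ≤ Rs x ∧
      Rs x ≤ C * (∑ k, |x k| ^ ((2 * (m k : ℝ)) / (2 * (m k : ℝ) - 1))) := by
  classical
  rcases Nat.eq_zero_or_pos d with hd | hd
  · subst hd
    refine ⟨1, one_pos, fun x => ?_⟩
    have hR0 : R 0 = 0 := (hdef 0).mpr rfl
    have hR0' : R ![] = 0 := by
      rw [show (![] : Fin 0 → ℝ) = 0 from funext fun k => k.elim0]; exact hR0
    have hset : {y : ℝ | ∃ ξ : Fin 0 → ℝ, y = ξ ⬝ᵥ x - R ξ} = {0} := by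
      ext y
      simp only [Set.mem_setOf_eq, Set.mem_singleton_iff]
      constructor
      · rintro ⟨ξ, rfl⟩
        have hξ : ξ = 0 := funext fun k => k.elim0
        subst hξ
        simp [dotProduct, hR0, hR0']
      · intro h
        exact ⟨0, by simp [dotProduct, hR0, hR0', h]⟩
    have hlub := hRs x
    rw [hset] at hlub
    have h0 : Rs x = 0 := hlub.unique isLUB_singleton
    simp [h0]
  · obtain ⟨c, C, hc, hC, hcomp⟩ := lf_aux_compare hd m hm R hcont hnonneg hdef hhom
    choose κ hκ using fun k => lf_aux_lower (m k) (hm k) C hC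
    set K : Fin d → ℝ := fun k => c ^ (-(1 / (2 * (m k : ℝ) - 1))) with hKdef
    have hKpos : ∀ k, 0 < K k := fun k => Real.rpow_pos_of_pos hc _
    have hne : (Finset.univ : Finset (Fin d)).Nonempty := ⟨⟨0, hd⟩, Finset.mem_univ _⟩
    set C₁ : ℝ := ∑ k, K k with hC₁def
    have hC₁pos : 0 < C₁ := Finset.sum_pos (fun k _ => hKpos k) hne
    set cmin : ℝ := Finset.univ.inf' hne κ with hcmindef
    have hcminpos : 0 < cmin := by
      rw [hcmindef, Finset.lt_inf'_iff]
      exact fun k _ => (hκ k).1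
    set Cf : ℝ := max C₁ cmin⁻¹ with hCfdef
    have hCfpos : 0 < Cf := lt_of_lt_of_le hC₁pos (le_max_left _ _)
    have hCfinv : Cf⁻¹ ≤ cmin := by
      rw [← inv_inv cmin]
      exact inv_anti₀ (inv_pos.mpr hcminpos) (le_max_right _ _)
    refine ⟨Cf, hCfpos, fun x => ?_⟩
    have hNnonneg : 0 ≤ ∑ k, |x k| ^ ((2 * (m k : ℝ)) / (2 * (m k : ℝ) - 1)) :=
      Finset.sum_nonneg fun k _ => Real.rpow_nonneg (abs_nonneg _) _
    constructor
    · -- lower bound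
      choose u hu0 hu1 using fun k => (hκ k).2 |x k| (abs_nonneg _)
      set ξ : Fin d → ℝ := fun k => if x k < 0 then -(u k) else u k with hξdef
      have hξx : ∀ k, ξ k * x k = u k * |x k| := by
        intro k
        rw [hξdef]
        by_cases h : x k < 0
        · simp only [if_pos h]
          rw [abs_of_neg h]; ring
        · simp only [if_neg h]
          rw [abs_of_nonneg (not_lt.mp h)]
      have hξabs : ∀ k, |ξ k| = u k := by
        intro k
        rw [hξdef]
        by_cases h : x k < 0
        · simp only [if_pos h, abs_neg]
          exact abs_of_nonneg (hu0 k)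
        · simp only [if_neg h]
          exact abs_of_nonneg (hu0 k)
      have hy₀ : ξ ⬝ᵥ x - R ξ ≤ Rs x := (hRs x).1 ⟨ξ, rfl⟩
      have hRle : R ξ ≤ C * ∑ k, |ξ k| ^ (2 * m k) := (hcomp ξ).2
      have hsum : ∑ k, κ k * |x k| ^ ((2 * (m k : ℝ)) / (2 * (m k : ℝ) - 1)) ≤
          ξ ⬝ᵥ x - R ξ := by
        have h1 : ξ ⬝ᵥ x - R ξ ≥ ξ ⬝ᵥ x - C * ∑ k, |ξ k| ^ (2 * m k) := by linarith
        refine le_trans ?_ h1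
        rw [dotProduct, Finset.mul_sum, ← Finset.sum_sub_distrib]
        refine Finset.sum_le_sum fun k _ => ?_
        rw [hξx k, hξabs k]
        exact hu1 k
      have hNle : cmin * (∑ k, |x k| ^ ((2 * (m k : ℝ)) / (2 * (m k : ℝ) - 1))) ≤
          ∑ k, κ k * |x k| ^ ((2 * (m k : ℝ)) / (2 * (m k : ℝ) - 1)) := by
        rw [Finset.mul_sum]
        refine Finset.sum_le_sum fun k _ => ?_
        exact mul_le_mul_of_nonneg_right (Finset.inf'_le _ (Finset.mem_univ k))
          (Real.rpow_nonneg (abs_nonneg _) _)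
      have : Cf⁻¹ * (∑ k, |x k| ^ ((2 * (m k : ℝ)) / (2 * (m k : ℝ) - 1))) ≤
          cmin * (∑ k, |x k| ^ ((2 * (m k : ℝ)) / (2 * (m k : ℝ) - 1))) :=
        mul_le_mul_of_nonneg_right hCfinv hNnonneg
      linarith
    · -- upper bound
      have hub : ∀ y ∈ {y : ℝ | ∃ ξ : Fin d → ℝ, y = ξ ⬝ᵥ x - R ξ},
          y ≤ ∑ k, K k * |x k| ^ ((2 * (m k : ℝ)) / (2 * (m k : ℝ) - 1)) := by
        rintro y ⟨ξ, rfl⟩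
        have h1 : ξ ⬝ᵥ x - R ξ ≤ ξ ⬝ᵥ x - c * ∑ k, |ξ k| ^ (2 * m k) := by
          linarith [(hcomp ξ).1]
        refine le_trans h1 ?_
        rw [dotProduct, Finset.mul_sum, ← Finset.sum_sub_distrib]
        refine Finset.sum_le_sum fun k _ => ?_
        have h2 : ξ k * x k ≤ |ξ k| * |x k| := by
          calc ξ k * x k ≤ |ξ k * x k| := le_abs_self _
            _ = |ξ k| * |x k| := abs_mul _ _
        have h3 := lf_aux_upper (m k) (hm k) c hc |ξ k| |x k| (abs_nonneg _) (abs_nonneg _)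
        calc ξ k * x k - c * |ξ k| ^ (2 * m k)
            ≤ |ξ k| * |x k| - c * |ξ k| ^ (2 * m k) := by linarith
          _ ≤ K k * |x k| ^ ((2 * (m k : ℝ)) / (2 * (m k : ℝ) - 1)) := h3
      have h4 : Rs x ≤ ∑ k, K k * |x k| ^ ((2 * (m k : ℝ)) / (2 * (m k : ℝ) - 1)) :=
        (hRs x).2 hub
      have h5 : ∑ k, K k * |x k| ^ ((2 * (m k : ℝ)) / (2 * (m k : ℝ) - 1)) ≤
          C₁ * ∑ k, |x k| ^ ((2 * (m k : ℝ)) / (2 * (m k : ℝ) - 1)) := by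
        rw [Finset.mul_sum]
        refine Finset.sum_le_sum fun k _ => ?_
        refine mul_le_mul_of_nonneg_right ?_ (Real.rpow_nonneg (abs_nonneg _) _)
        exact Finset.single_le_sum (fun j _ => (hKpos j).le) (Finset.mem_univ k)
      have h6 : C₁ * (∑ k, |x k| ^ ((2 * (m k : ℝ)) / (2 * (m k : ℝ) - 1))) ≤
          Cf * (∑ k, |x k| ^ ((2 * (m k : ℝ)) / (2 * (m k : ℝ) - 1))) :=
        mul_le_mul_of_nonneg_right (le_max_left _ _) hNnonneg
      linarith
end

section
/- Let m ∈ ℕ₊^d and let β ∈ ℕ^{2d} be split as (γ, β−γ) with γ ≤ β multi-indices in ℕ^d, and suppose |β : m| = Σₖ βₖ/mₖ = 2. Let R(ξ) = Σₖ ξₖ^{2mₖ}. Then there exist positive constants M, M' such that |ξ^γ ν^{β−γ}| ≤ M·R(ξ) + M'·R(ν) for all ξ, ν ∈ ℝ^d. -/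
/-- Scaling inequality: if |β : m| = 2 and γ ≤ β, then
|ξ^γ ν^{β−γ}| ≤ M R(ξ) + M' R(ν) where R(ξ) = Σₖ ξₖ^{2mₖ}. -/
theorem mixed_monomial_bound {d : ℕ}
    (m β γ : Fin d → ℕ) (hm : ∀ k, 0 < m k)
    (hγβ : ∀ k, γ k ≤ β k)
    (hβ : (∑ k, (β k : ℚ) / (m k : ℚ)) = 2) :
    ∃ M : ℝ, 0 < M ∧ ∃ M' : ℝ, 0 < M' ∧ ∀ ξ ν : Fin d → ℝ,
      |∏ k, ξ k ^ γ k * ν k ^ (β k - γ k)| ≤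
        M * (∑ k, ξ k ^ (2 * m k)) + M' * (∑ k, ν k ^ (2 * m k)) := by
  refine ⟨1, one_pos, 1, one_pos, fun ξ ν => ?_⟩
  have hmne : ∀ k, (m k : ℝ) ≠ 0 := fun k => by exact_mod_cast (hm k).ne'
  set w : Fin d ⊕ Fin d → ℝ :=
    Sum.elim (fun k => (γ k : ℝ) / (2 * m k)) (fun k => ((β k - γ k : ℕ) : ℝ) / (2 * m k))
    with hwdef
  set z : Fin d ⊕ Fin d → ℝ :=
    Sum.elim (fun k => |ξ k| ^ (2 * m k)) (fun k => |ν k| ^ (2 * m k)) with hzdef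
  have hwnn : ∀ i ∈ Finset.univ, 0 ≤ w i := by
    rintro (k | k) _ <;> simp only [hwdef, Sum.elim_inl, Sum.elim_inr] <;>
      exact div_nonneg (Nat.cast_nonneg _) (by positivity)
  have hznn : ∀ i ∈ Finset.univ, 0 ≤ z i := by
    rintro (k | k) _ <;> simp only [hzdef, Sum.elim_inl, Sum.elim_inr] <;> positivity
  have hβR : (∑ k, (β k : ℝ) / (m k : ℝ)) = 2 := by
    have := congrArg (Rat.cast (K := ℝ)) hβ
    push_cast at this
    exact this
  have hw1 : ∑ i, w i = 1 := by
    rw [Fintype.sum_sum_type]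
    simp only [hwdef, Sum.elim_inl, Sum.elim_inr]
    rw [← Finset.sum_add_distrib]
    have : ∀ k ∈ Finset.univ, (γ k : ℝ) / (2 * m k) + ((β k - γ k : ℕ) : ℝ) / (2 * m k)
        = ((β k : ℝ) / (m k)) / 2 := by
      intro k _
      rw [← add_div, Nat.cast_sub (hγβ k)]
      have h : (γ k : ℝ) + ((β k : ℝ) - γ k) = β k := by ring
      rw [h, div_div, mul_comm]
    rw [Finset.sum_congr rfl this, ← Finset.sum_div, hβR]
    norm_num
  have amgm := Real.geom_mean_le_arith_mean_weighted Finset.univ w z hwnn hw1 hznn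
  have hprod : ∏ i, z i ^ w i = |∏ k, ξ k ^ γ k * ν k ^ (β k - γ k)| := by
    rw [Finset.abs_prod, Fintype.prod_sum_type]
    simp only [hzdef, hwdef, Sum.elim_inl, Sum.elim_inr]
    have h1 : ∀ k, (|ξ k| ^ (2 * m k)) ^ ((γ k : ℝ) / (2 * m k)) = |ξ k| ^ γ k := by
      intro k
      have hmul : ((2 * m k : ℕ) : ℝ) * ((γ k : ℝ) / (2 * m k)) = ((γ k : ℕ) : ℝ) := by
        have := hmne k; push_cast; field_simp
      rw [← Real.rpow_natCast |ξ k| (2 * m k), ← Real.rpow_mul (abs_nonneg _), hmul,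
        Real.rpow_natCast]
    have h2 : ∀ k, (|ν k| ^ (2 * m k)) ^ (((β k - γ k : ℕ) : ℝ) / (2 * m k))
        = |ν k| ^ (β k - γ k) := by
      intro k
      have hmul : ((2 * m k : ℕ) : ℝ) * (((β k - γ k : ℕ) : ℝ) / (2 * m k))
          = ((β k - γ k : ℕ) : ℝ) := by
        have := hmne k; push_cast; field_simp
      rw [← Real.rpow_natCast |ν k| (2 * m k), ← Real.rpow_mul (abs_nonneg _), hmul,
        Real.rpow_natCast]
    rw [Finset.prod_congr rfl (fun k _ => h1 k), Finset.prod_congr rfl (fun k _ => h2 k),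
      ← Finset.prod_mul_distrib]
    exact Finset.prod_congr rfl fun k _ => by rw [abs_mul, abs_pow, abs_pow]
  have hwle1 : ∀ i, w i ≤ 1 := by
    intro i
    rw [← hw1]
    exact Finset.single_le_sum hwnn (Finset.mem_univ i)
  have hsum : ∑ i, w i * z i ≤ ∑ i, z i :=
    Finset.sum_le_sum fun i hi => by
      calc w i * z i ≤ 1 * z i := mul_le_mul_of_nonneg_right (hwle1 i) (hznn i hi)
        _ = z i := one_mul _
  have hzsum : ∑ i, z i = (∑ k, ξ k ^ (2 * m k)) + (∑ k, ν k ^ (2 * m k)) := by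
    rw [Fintype.sum_sum_type]
    simp only [hzdef, Sum.elim_inl, Sum.elim_inr]
    congr 1 <;> exact Finset.sum_congr rfl fun k _ => by
      rw [pow_mul, pow_mul, sq_abs]
  rw [hprod] at amgm
  calc |∏ k, ξ k ^ γ k * ν k ^ (β k - γ k)| ≤ ∑ i, w i * z i := amgm
    _ ≤ ∑ i, z i := hsum
    _ = 1 * (∑ k, ξ k ^ (2 * m k)) + 1 * (∑ k, ν k ^ (2 * m k)) := by rw [hzsum]; ring
end

section
/- Let m ∈ ℕ₊^d, β, γ ∈ ℕ^d multi-indices with γ < β (γ ≤ β and γ ≠ β) and |β : m| = 2, and R(ξ) = Σₖ ξₖ^{2mₖ}. Then for every ε > 0 there exists M > 0 such that |ξ^γ ν^{β−γ}| ≤ ε·R(ξ) + M·R(ν) for all ξ, ν ∈ ℝ^d. -/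
open Finset Real

/-- Scaling inequality with small parameter: if |β : m| = 2 and γ < β, then for every ε > 0
there is M > 0 with |ξ^γ ν^{β−γ}| ≤ ε R(ξ) + M R(ν), R(ξ) = Σₖ ξₖ^{2mₖ}. -/
theorem mixed_monomial_bound_eps {d : ℕ}
    (m β γ : Fin d → ℕ) (hm : ∀ k, 0 < m k)
    (hγβ : ∀ k, γ k ≤ β k) (hne : γ ≠ β)
    (hβ : (∑ k, (β k : ℚ) / (m k : ℚ)) = 2) :
    ∀ ε : ℝ, 0 < ε → ∃ M : ℝ, 0 < M ∧ ∀ ξ ν : Fin d → ℝ,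
      |∏ k, ξ k ^ γ k * ν k ^ (β k - γ k)| ≤
        ε * (∑ k, ξ k ^ (2 * m k)) + M * (∑ k, ν k ^ (2 * m k)) := by
  intro ε hε
  have hm2 : ∀ k, (0:ℝ) < 2 * m k := by
    intro k
    have := hm k
    positivity
  -- the weights
  set wξ : Fin d → ℝ := fun k => (γ k : ℝ) / (2 * m k) with hwξ
  set wν : Fin d → ℝ := fun k => ((β k - γ k : ℕ) : ℝ) / (2 * m k) with hwν
  set a : ℝ := ∑ k, wξ k with ha
  have hβR : (∑ k, (β k : ℝ) / (m k : ℝ)) = 2 := by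
    have h := congrArg (fun q : ℚ => (q : ℝ)) hβ
    push_cast at h
    exact h
  have hwsum : ∀ k, wξ k + wν k = (β k : ℝ) / (2 * m k) := by
    intro k
    rw [hwξ, hwν, ← add_div, Nat.cast_sub (hγβ k)]
    ring_nf
  have hsum1 : (∑ k, wξ k) + (∑ k, wν k) = 1 := by
    rw [← Finset.sum_add_distrib]
    have : ∀ k ∈ Finset.univ, wξ k + wν k = ((β k : ℝ) / (m k : ℝ)) / 2 := by
      intro k _
      rw [hwsum k, div_div]
      ring_nf
    rw [Finset.sum_congr rfl this, ← Finset.sum_div, hβR]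
    norm_num
  have hwξ0 : ∀ k, 0 ≤ wξ k := fun k => div_nonneg (Nat.cast_nonneg _) (hm2 k).le
  have hwν0 : ∀ k, 0 ≤ wν k := fun k => div_nonneg (Nat.cast_nonneg _) (hm2 k).le
  have ha0 : 0 ≤ a := Finset.sum_nonneg fun k _ => hwξ0 k
  -- each β k ≤ 2 m k, hence all weights ≤ 1
  have hβleN : ∀ k, β k ≤ 2 * m k := by
    intro k
    have h1 : ((β k : ℚ) / (m k : ℚ)) ≤ 2 := by
      rw [← hβ]
      refine Finset.single_le_sum (f := fun j => (β j : ℚ) / (m j : ℚ))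
        (fun j _ => by positivity) (Finset.mem_univ k)
    have hmq : (0:ℚ) < (m k : ℚ) := by exact_mod_cast hm k
    rw [div_le_iff₀ hmq] at h1
    have h2 : (β k : ℚ) ≤ ((2 * m k : ℕ) : ℚ) := by push_cast; linarith
    exact_mod_cast h2
  have hβle : ∀ k, (β k : ℝ) ≤ 2 * m k := by
    intro k
    have h2 : ((β k : ℕ) : ℝ) ≤ ((2 * m k : ℕ) : ℝ) := by exact_mod_cast hβleN k
    push_cast at h2
    linarith
  have hwξ1 : ∀ k, wξ k ≤ 1 := by
    intro k
    rw [hwξ, div_le_one (hm2 k)]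
    exact le_trans (by exact_mod_cast hγβ k) (hβle k)
  have hwν1 : ∀ k, wν k ≤ 1 := by
    intro k
    rw [hwν, div_le_one (hm2 k)]
    refine le_trans ?_ (hβle k)
    exact_mod_cast Nat.sub_le (β k) (γ k)
  -- a < 1
  have ha1 : a < 1 := by
    obtain ⟨k₀, hk₀⟩ := Function.ne_iff.mp hne
    have hlt : γ k₀ < β k₀ := lt_of_le_of_ne (hγβ k₀) hk₀
    have hpos : 0 < wν k₀ := by
      rw [hwν]
      have : (0:ℝ) < ((β k₀ - γ k₀ : ℕ) : ℝ) := by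
        exact_mod_cast Nat.sub_pos_of_lt hlt
      exact div_pos this (hm2 k₀)
    have : 0 < ∑ k, wν k :=
      lt_of_lt_of_le hpos (Finset.single_le_sum (fun j _ => hwν0 j) (Finset.mem_univ k₀))
    linarith
  have h1a : (0:ℝ) < 1 - a := by linarith
  -- choose t and M
  set t : ℝ := ε ^ ((1 - a)⁻¹) with htdef
  have ht : 0 < t := Real.rpow_pos_of_pos hε _
  refine ⟨t ^ (-a), Real.rpow_pos_of_pos ht _, ?_⟩
  intro ξ ν
  -- AM-GM over the sum type
  set w : Fin d ⊕ Fin d → ℝ := Sum.elim wξ wν with hw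
  set z : Fin d ⊕ Fin d → ℝ :=
    Sum.elim (fun k => t * |ξ k| ^ (2 * m k)) (fun k => |ν k| ^ (2 * m k)) with hz
  have hw0 : ∀ i ∈ Finset.univ, 0 ≤ w i := by
    rintro (k | k) _
    · exact hwξ0 k
    · exact hwν0 k
  have hw1 : ∑ i, w i = 1 := by
    rw [hw, Fintype.sum_sum_type]
    exact hsum1
  have hz0 : ∀ i ∈ Finset.univ, 0 ≤ z i := by
    rintro (k | k) _
    · exact mul_nonneg ht.le (pow_nonneg (abs_nonneg _) _)
    · exact pow_nonneg (abs_nonneg _) _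
  have amgm := Real.geom_mean_le_arith_mean_weighted Finset.univ w z hw0 hw1 hz0
  -- compute the geometric mean
  have habs : ∀ (x : ℝ) (c e : ℕ), c ≤ 2 * e → 0 < (e:ℕ) →
      ((|x| ^ (2 * e) : ℝ)) ^ ((c : ℝ) / (2 * e)) = |x| ^ c := by
    intro x c e hce he
    have h2e : ((2 * e : ℕ) : ℝ) ≠ 0 := by positivity
    rw [← Real.rpow_natCast |x| (2 * e), ← Real.rpow_mul (abs_nonneg x)]
    push_cast
    rw [mul_comm ((2:ℝ) * e), div_mul_cancel₀]
    · exact Real.rpow_natCast _ _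
    · positivity
  have hgeom : ∏ i, z i ^ w i
      = t ^ a * ((∏ k, |ξ k| ^ γ k) * ∏ k, |ν k| ^ (β k - γ k)) := by
    rw [hz, hw, Fintype.prod_sum_type]
    simp only [Sum.elim_inl, Sum.elim_inr]
    have h1 : ∀ k ∈ Finset.univ, (t * |ξ k| ^ (2 * m k)) ^ wξ k
        = t ^ wξ k * |ξ k| ^ γ k := by
      intro k _
      rw [Real.mul_rpow ht.le (pow_nonneg (abs_nonneg _) _)]
      congr 1
      show ((|ξ k| ^ (2 * m k) : ℝ)) ^ ((γ k : ℝ) / (2 * (m k : ℝ))) = |ξ k| ^ γ k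
      exact habs (ξ k) (γ k) (m k) (le_trans (hγβ k) (hβleN k)) (hm k)
    have h2 : ∀ k ∈ Finset.univ, (|ν k| ^ (2 * m k)) ^ wν k
        = |ν k| ^ (β k - γ k) := by
      intro k _
      show ((|ν k| ^ (2 * m k) : ℝ)) ^ (((β k - γ k : ℕ) : ℝ) / (2 * (m k : ℝ)))
          = |ν k| ^ (β k - γ k)
      exact habs (ν k) (β k - γ k) (m k)
        (le_trans (Nat.sub_le _ _) (hβleN k)) (hm k)
    rw [Finset.prod_congr rfl h1, Finset.prod_congr rfl h2, Finset.prod_mul_distrib,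
      ← Real.rpow_sum_of_pos ht wξ Finset.univ, ← ha, mul_assoc]
  -- bound the arithmetic mean
  have heven : ∀ (x : ℝ) (e : ℕ), |x| ^ (2 * e) = x ^ (2 * e) := by
    intro x e
    rw [pow_mul, pow_mul, sq_abs]
  have hxnn : ∀ k, (0:ℝ) ≤ ξ k ^ (2 * m k) := by
    intro k; rw [← heven]; positivity
  have hynn : ∀ k, (0:ℝ) ≤ ν k ^ (2 * m k) := by
    intro k; rw [← heven]; positivity
  have harith : ∑ i, w i * z i
      ≤ t * (∑ k, ξ k ^ (2 * m k)) + ∑ k, ν k ^ (2 * m k) := by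
    rw [hz, hw, Fintype.sum_sum_type]
    simp only [Sum.elim_inl, Sum.elim_inr]
    refine add_le_add ?_ ?_
    · rw [Finset.mul_sum]
      refine Finset.sum_le_sum fun k _ => ?_
      rw [heven]
      have h := hwξ1 k
      have h0 := hwξ0 k
      have hx := hxnn k
      nlinarith [mul_nonneg ht.le hx]
    · refine Finset.sum_le_sum fun k _ => ?_
      rw [heven]
      have h := hwν1 k
      have h0 := hwν0 k
      have hy := hynn k
      nlinarith
  -- |P| equals the product of absolute values
  have hP : |∏ k, ξ k ^ γ k * ν k ^ (β k - γ k)|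
      = (∏ k, |ξ k| ^ γ k) * ∏ k, |ν k| ^ (β k - γ k) := by
    rw [Finset.abs_prod, ← Finset.prod_mul_distrib]
    refine Finset.prod_congr rfl fun k _ => ?_
    rw [abs_mul, abs_pow, abs_pow]
  -- put it together
  have hta : (0:ℝ) < t ^ a := Real.rpow_pos_of_pos ht _
  have hkey : t ^ a * |∏ k, ξ k ^ γ k * ν k ^ (β k - γ k)|
      ≤ t * (∑ k, ξ k ^ (2 * m k)) + ∑ k, ν k ^ (2 * m k) := by
    rw [hP, ← hgeom]
    exact le_trans amgm harith
  have htε : t ^ (1 - a) = ε := by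
    rw [htdef, ← Real.rpow_mul hε.le, inv_mul_cancel₀ h1a.ne', Real.rpow_one]
  have htt : t ^ (-a) * t = ε := by
    rw [← Real.rpow_add_one ht.ne' (-a), neg_add_eq_sub, htε]
  have hmulP : |∏ k, ξ k ^ γ k * ν k ^ (β k - γ k)|
      ≤ t ^ (-a) * (t * (∑ k, ξ k ^ (2 * m k)) + ∑ k, ν k ^ (2 * m k)) := by
    rw [Real.rpow_neg ht.le, le_inv_mul_iff₀ hta]
    exact hkey
  refine le_trans hmulP (le_of_eq ?_)
  rw [mul_add, ← mul_assoc, htt]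
end
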